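/- arXiv:1601.06331 — 11 statements merged into one kernel-verified Lean document; each statement's English description precedes it below -/
import Mathlib

section
/- Let q ∈ ℝⁿ with q ⪰ 0 componentwise. Then q ∈ C if and only if for every γ ∈ ℝⁿ with γ ⪰ 0 there exists a priority decision d ∈ D such that ⟨γ, q⟩ ≤ ⟨γ, p(d)⟩; equivalently, q ∈ C if and only if for every γ ⪰ 0, ⟨γ, q⟩ ≤ max_{d ∈ D} ⟨γ, p(d)⟩. -/
open Finset Set

/-- `inDS S d` : the priority decision `d` assigns the `|S|` highest priorities
(i.e. the ranks `k` with `(k : ℕ) < S.card`) exactly to the users in `S`. -/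
def inDS {n : ℕ} (S : Finset (Fin n)) (d : Equiv.Perm (Fin n)) : Prop :=
  ∀ k : Fin n, d k ∈ S ↔ (k : ℕ) < S.card

/-- The projection `x^S` of a vector on the coordinates in `S`. -/
def projS {n : ℕ} (S : Finset (Fin n)) (x : Fin n → ℝ) : Fin n → ℝ :=
  fun i => if i ∈ S then x i else 0

/-- Euclidean inner product on `ℝⁿ`. -/
def ip {n : ℕ} (a b : Fin n → ℝ) : ℝ := ∑ i, a i * b i

/-- `P = {p(d) : d ∈ D}`. -/
def Pfull {n : ℕ} (p : Equiv.Perm (Fin n) → Fin n → ℝ) : Set (Fin n → ℝ) :=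
  Set.range p

/-- `P^S = {p(d)^S : d ∈ D(S)}`. -/
def PS {n : ℕ} (p : Equiv.Perm (Fin n) → Fin n → ℝ) (S : Finset (Fin n)) :
    Set (Fin n → ℝ) :=
  {y | ∃ d : Equiv.Perm (Fin n), inDS S d ∧ y = projS S (p d)}

/-- `C` : the set of nonnegative vectors dominated by a point of `conv(P)`. -/
def Cfull {n : ℕ} (p : Equiv.Perm (Fin n) → Fin n → ℝ) : Set (Fin n → ℝ) :=
  {q | (∀ i, 0 ≤ q i) ∧ ∃ x ∈ convexHull ℝ (Pfull p), ∀ i, q i ≤ x i}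

/-- `C^S` : nonnegative vectors supported on `S` dominated by a point of `conv(P^S)`. -/
def CS {n : ℕ} (p : Equiv.Perm (Fin n) → Fin n → ℝ) (S : Finset (Fin n)) :
    Set (Fin n → ℝ) :=
  {q | (∀ i, 0 ≤ q i) ∧ (∀ i, i ∉ S → q i = 0) ∧
    ∃ x ∈ convexHull ℝ (PS p S), ∀ i, q i ≤ x i}

/-- `B^S` : nonnegative vectors supported on `S` dominating a point of `conv(P^S)`. -/
def BS {n : ℕ} (p : Equiv.Perm (Fin n) → Fin n → ℝ) (S : Finset (Fin n)) :
    Set (Fin n → ℝ) :=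
  {q | (∀ i, 0 ≤ q i) ∧ (∀ i, i ∉ S → q i = 0) ∧
    ∃ x ∈ convexHull ℝ (PS p S), ∀ i, x i ≤ q i}

/-- `S_i(d)` : the set of users with higher priority than user `i` under decision `d`. -/
def higherSet {n : ℕ} (d : Equiv.Perm (Fin n)) (i : Fin n) : Set (Fin n) :=
  {j | (d.symm j : ℕ) < (d.symm i : ℕ)}

/-- Monotonicity in payoffs: if `S_i(d₁) ⊆ S_i(d₂)` then `p_i(d₁) ≥ p_i(d₂)`. -/
def Mono {n : ℕ} (p : Equiv.Perm (Fin n) → Fin n → ℝ) : Prop :=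
  ∀ d₁ d₂ : Equiv.Perm (Fin n), ∀ i : Fin n,
    higherSet d₁ i ⊆ higherSet d₂ i → p d₂ i ≤ p d₁ i

/-- The inner-bound region `R_IB`. -/
def RIB {n : ℕ} (p : Equiv.Perm (Fin n) → Fin n → ℝ) : Set (Fin n → ℝ) :=
  {q | (∀ i, 0 ≤ q i) ∧ ∃ α : Fin n → ℝ, (∀ i, 0 < α i) ∧
    ∀ S : Finset (Fin n), ∀ d : Equiv.Perm (Fin n), inDS S d →
      ∑ i ∈ S, α i * q i ≤ ∑ i ∈ S, α i * p d i}

/-- The region `R = {q ⪰ 0 : ∀ S, q^S ∈ C^S \ B^S}`. -/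
def Rreg {n : ℕ} (p : Equiv.Perm (Fin n) → Fin n → ℝ) : Set (Fin n → ℝ) :=
  {q | (∀ i, 0 ≤ q i) ∧ ∀ S : Finset (Fin n), projS S q ∈ CS p S \ BS p S}

lemma ip_lin {n : ℕ} (γ : Fin n → ℝ) : IsLinearMap ℝ (ip γ) := by
  constructor
  · intro a b; simp [ip, mul_add, Finset.sum_add_distrib]
  · intro c a; simp only [ip, Finset.mul_sum, smul_eq_mul, Pi.smul_apply]
    exact Finset.sum_congr rfl fun i _ => by ring

lemma clm_ip {n : ℕ} (f : (Fin n → ℝ) →L[ℝ] ℝ) (y : Fin n → ℝ) :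
    f y = ip (fun i => f (Pi.single i 1)) y := by
  have h : y = ∑ i, y i • (Pi.single i 1 : Fin n → ℝ) := by
    funext j
    simp [Pi.single_apply, Finset.sum_apply]
  conv_lhs => rw [h]
  simp [ip, mul_comm]

lemma key_iff {n : ℕ}
    (p : Equiv.Perm (Fin n) → Fin n → ℝ)
    (q : Fin n → ℝ) (hq : ∀ i, 0 ≤ q i) :
    q ∈ Cfull p ↔
      ∀ γ : Fin n → ℝ, (∀ i, 0 ≤ γ i) →
        ∃ d : Equiv.Perm (Fin n), ip γ q ≤ ip γ (p d) := by
  constructor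
  · rintro ⟨-, x, hx, hqx⟩ γ hγ
    obtain ⟨d₀, -, hd₀⟩ := Finset.exists_max_image (Finset.univ : Finset (Equiv.Perm (Fin n)))
      (fun d => ip γ (p d)) ⟨Equiv.refl _, Finset.mem_univ _⟩
    refine ⟨d₀, ?_⟩
    have h1 : ip γ q ≤ ip γ x :=
      Finset.sum_le_sum fun i _ => mul_le_mul_of_nonneg_left (hqx i) (hγ i)
    have h2 : x ∈ {y : Fin n → ℝ | ip γ y ≤ ip γ (p d₀)} := by
      refine convexHull_min ?_ (convex_halfSpace_le (ip_lin γ) _) hx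
      rintro y ⟨d, rfl⟩
      exact hd₀ d (Finset.mem_univ d)
    exact h1.trans h2
  · intro hsep
    by_contra hqC
    -- K = convexHull P is compact convex, U = Ici q is closed convex, disjoint
    have hPfin : (Pfull p).Finite := Set.finite_range p
    have hK : IsCompact (convexHull ℝ (Pfull p)) := hPfin.isCompact_convexHull ℝ
    have hKc : Convex ℝ (convexHull ℝ (Pfull p)) := convex_convexHull ℝ _
    have hU : IsClosed (Set.Ici q) := isClosed_Ici
    have hUc : Convex ℝ (Set.Ici q) := convex_Ici q
    have hdisj : Disjoint (convexHull ℝ (Pfull p)) (Set.Ici q) := by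
      rw [Set.disjoint_left]
      intro x hx hxq
      exact hqC ⟨hq, x, hx, fun i => hxq i⟩
    obtain ⟨f, u, v, hfu, huv, hfv⟩ :=
      geometric_hahn_banach_compact_closed hKc hK hUc hU hdisj
    set γ : Fin n → ℝ := fun i => f (Pi.single i 1) with hγdef
    have hγ : ∀ i, 0 ≤ γ i := by
      intro i
      by_contra hneg
      push_neg at hneg
      set t : ℝ := (f q - v + 1) / (-γ i) with ht
      have htpos : 0 < t := by
        apply div_pos
        · have : v < f q := hfv q Set.self_mem_Ici
          linarith
        · linarith
      have hmem : q + t • (Pi.single i 1 : Fin n → ℝ) ∈ Set.Ici q := by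
        intro j
        simp only [Pi.add_apply, Pi.smul_apply, smul_eq_mul]
        have : 0 ≤ t * (Pi.single i 1 : Fin n → ℝ) j := by
          apply mul_nonneg htpos.le
          by_cases h : j = i <;> simp [Pi.single_apply, h]
        linarith
      have := hfv _ hmem
      rw [map_add, map_smul] at this
      have hfe : f (Pi.single i 1) = γ i := rfl
      rw [smul_eq_mul, hfe] at this
      have : v < f q + t * γ i := this
      have hγne : (-γ i) ≠ 0 := by simp; linarith
      have htγ : t * γ i = -(f q - v + 1) := by
        calc t * γ i = -((f q - v + 1) / (-γ i) * (-γ i)) := by rw [ht]; ring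
          _ = -(f q - v + 1) := by rw [div_mul_cancel₀ _ hγne]
      rw [htγ] at this
      linarith
    obtain ⟨d, hd⟩ := hsep γ hγ
    have h1 : ip γ q = f q := (clm_ip f q).symm
    have h2 : ip γ (p d) = f (p d) := (clm_ip f (p d)).symm
    have h3 : f (p d) < u := hfu (p d) (subset_convexHull ℝ _ ⟨d, rfl⟩)
    have h4 : v < f q := hfv q Set.self_mem_Ici
    rw [h1, h2] at hd
    linarith

theorem stmt0 {n : ℕ} (hn : 1 ≤ n)
    (p : Equiv.Perm (Fin n) → Fin n → ℝ) (hp : ∀ d i, 0 ≤ p d i)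
    (q : Fin n → ℝ) (hq : ∀ i, 0 ≤ q i) :
    (q ∈ Cfull p ↔
      ∀ γ : Fin n → ℝ, (∀ i, 0 ≤ γ i) →
        ∃ d : Equiv.Perm (Fin n), ip γ q ≤ ip γ (p d)) ∧
    (q ∈ Cfull p ↔
      ∀ γ : Fin n → ℝ, (∀ i, 0 ≤ γ i) →
        ip γ q ≤ sSup (Set.range fun d : Equiv.Perm (Fin n) => ip γ (p d))) := by
  have h1 := key_iff p q hq
  refine ⟨h1, h1.trans ?_⟩
  constructor
  · intro h γ hγ
    obtain ⟨d, hd⟩ := h γ hγ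
    exact hd.trans (le_csSup ((Set.finite_range _).bddAbove) ⟨d, rfl⟩)
  · intro h γ hγ
    have hfin : (Set.range fun d : Equiv.Perm (Fin n) => ip γ (p d)).Finite :=
      Set.finite_range _
    have hne : (Set.range fun d : Equiv.Perm (Fin n) => ip γ (p d)).Nonempty :=
      Set.range_nonempty _
    obtain ⟨d, hd⟩ := hne.csSup_mem hfin
    exact ⟨d, (h γ hγ).trans hd.ge⟩
end

section
/- Suppose the system satisfies monotonicity in payoffs. Then for every q ∈ C and every subset S ⊆ N, the projection q^S belongs to C^S. -/
open Finset Set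

lemma exists_good_perm {n : ℕ} (S : Finset (Fin n)) (d : Equiv.Perm (Fin n)) :
    ∃ d' : Equiv.Perm (Fin n), inDS S d' ∧
      ∀ i ∈ S, higherSet d' i ⊆ higherSet d i := by
  classical
  set r : Fin n → ℕ := fun j => (d.symm j : ℕ) with hr
  have hrinj : Function.Injective r := by
    intro a b h
    exact d.symm.injective (Fin.ext h)
  set g : Fin n → ℕ := fun j =>
    if j ∈ S then (S.filter fun s => r s < r j).card
    else S.card + ((Sᶜ).filter fun s => r s < r j).card with hg
  have hcardn : S.card ≤ n := by simpa using Finset.card_le_univ S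
  have hcompl : Sᶜ.card = n - S.card := by simp [Finset.card_compl]
  have gS : ∀ j ∈ S, g j < S.card := by
    intro j hj
    have h1 : (S.filter fun s => r s < r j).card < S.card := by
      apply Finset.card_lt_card
      rw [Finset.ssubset_iff_of_subset (Finset.filter_subset _ _)]
      exact ⟨j, hj, by simp⟩
    simpa [hg, hj] using h1
  have gSc : ∀ j ∉ S, S.card ≤ g j := by
    intro j hj
    simp [hg, hj]
  have hglt : ∀ j, g j < n := by
    intro j
    by_cases hj : j ∈ S
    · exact lt_of_lt_of_le (gS j hj) hcardn
    · have h1 : ((Sᶜ).filter fun s => r s < r j).card < Sᶜ.card := by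
        apply Finset.card_lt_card
        rw [Finset.ssubset_iff_of_subset (Finset.filter_subset _ _)]
        exact ⟨j, by simpa using hj, by simp⟩
      have : g j = S.card + ((Sᶜ).filter fun s => r s < r j).card := by simp [hg, hj]
      omega
  have key : ∀ (T : Finset (Fin n)), ∀ a ∈ T, ∀ b ∈ T, r a < r b →
      (T.filter fun s => r s < r a).card < (T.filter fun s => r s < r b).card := by
    intro T a ha b hb hab
    apply Finset.card_lt_card
    rw [Finset.ssubset_iff_of_subset]
    · exact ⟨a, by simp [ha, hab], by simp⟩
    · intro s hs
      simp only [Finset.mem_filter] at hs ⊢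
      exact ⟨hs.1, hs.2.trans hab⟩
  have ginj : Function.Injective g := by
    intro a b hab
    by_contra hne
    have hrne : r a ≠ r b := fun h => hne (hrinj h)
    by_cases haS : a ∈ S <;> by_cases hbS : b ∈ S
    · have hab' : (S.filter fun s => r s < r a).card
          = (S.filter fun s => r s < r b).card := by
        simpa [hg, haS, hbS] using hab
      rcases lt_or_gt_of_ne hrne with h | h
      · have := key S a haS b hbS h; omega
      · have := key S b hbS a haS h; omega
    · have := gS a haS; have := gSc b hbS; omega
    · have := gS b hbS; have := gSc a haS; omega
    · have hab' : ((Sᶜ).filter fun s => r s < r a).card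
          = ((Sᶜ).filter fun s => r s < r b).card := by
        have h1 : g a = S.card + ((Sᶜ).filter fun s => r s < r a).card := by
          simp [hg, haS]
        have h2 : g b = S.card + ((Sᶜ).filter fun s => r s < r b).card := by
          simp [hg, hbS]
        omega
      have haS' : a ∈ Sᶜ := by simpa using haS
      have hbS' : b ∈ Sᶜ := by simpa using hbS
      rcases lt_or_gt_of_ne hrne with h | h
      · have := key Sᶜ a haS' b hbS' h; omega
      · have := key Sᶜ b hbS' a haS' h; omega
  set f : Fin n → Fin n := fun j => ⟨g j, hglt j⟩ with hf
  have finj : Function.Injective f := by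
    intro a b h
    exact ginj (by simpa [hf] using congrArg Fin.val h)
  have fbij : Function.Bijective f := Finite.injective_iff_bijective.mp finj
  refine ⟨(Equiv.ofBijective f fbij).symm, ?_, ?_⟩
  · intro k
    have hk : g ((Equiv.ofBijective f fbij).symm k) = (k : ℕ) := by
      have h0 : f ((Equiv.ofBijective f fbij).symm k) = k :=
        (Equiv.ofBijective f fbij).apply_symm_apply k
      exact congrArg Fin.val h0
    constructor
    · intro h
      rw [← hk]
      exact gS _ h
    · intro h
      by_contra hc
      have := gSc _ hc
      omega
  · intro i hi j hj
    simp only [higherSet, Set.mem_setOf_eq, Equiv.symm_symm, Equiv.ofBijective_apply] at hj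
    have hgij : g j < g i := hj
    have hjS : j ∈ S := by
      by_contra hc
      have := gSc j hc
      have := gS i hi
      omega
    have hrji : r j < r i := by
      rcases lt_trichotomy (r j) (r i) with h | h | h
      · exact h
      · exact absurd (hrinj h) (by rintro rfl; omega)
      · have := key S i hi j hjS h
        have h1 : g i = (S.filter fun s => r s < r i).card := by simp [hg, hi]
        have h2 : g j = (S.filter fun s => r s < r j).card := by simp [hg, hjS]
        omega
    exact hrji

theorem stmt1 {n : ℕ} (hn : 1 ≤ n)
    (p : Equiv.Perm (Fin n) → Fin n → ℝ) (hp : ∀ d i, 0 ≤ p d i)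
    (hmono : Mono p) :
    ∀ q ∈ Cfull p, ∀ S : Finset (Fin n), projS S q ∈ CS p S := by
  classical
  rintro q ⟨hq0, x, hx, hqx⟩ S
  set A := convexHull ℝ (PS p S) with hA
  have hAnn : ∀ y ∈ A, ∀ i, 0 ≤ y i := by
    have hsub : A ⊆ {y : Fin n → ℝ | ∀ i, 0 ≤ y i} := by
      apply convexHull_min
      · rintro y ⟨d, hd, rfl⟩ i
        by_cases hi : i ∈ S <;> simp [projS, hi, hp]
      · intro y1 h1 y2 h2 a b ha hb hab i
        simp only [Pi.add_apply, Pi.smul_apply, smul_eq_mul]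
        exact add_nonneg (mul_nonneg ha (h1 i)) (mul_nonneg hb (h2 i))
    exact fun y hy i => hsub hy i
  set E : Set (Fin n → ℝ) := {x | ∃ y ∈ A, ∀ i ∈ S, x i ≤ y i} with hE
  have hEconv : Convex ℝ E := by
    rintro x1 ⟨y1, hy1, h1⟩ x2 ⟨y2, hy2, h2⟩ a b ha hb hab
    refine ⟨a • y1 + b • y2, (convex_convexHull ℝ _) hy1 hy2 ha hb hab, ?_⟩
    intro i hi
    simp only [Pi.add_apply, Pi.smul_apply, smul_eq_mul]
    exact add_le_add (mul_le_mul_of_nonneg_left (h1 i hi) ha)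
      (mul_le_mul_of_nonneg_left (h2 i hi) hb)
  have hPE : Pfull p ⊆ E := by
    rintro _ ⟨d, rfl⟩
    obtain ⟨d', hd', hsub⟩ := exists_good_perm S d
    refine ⟨projS S (p d'), subset_convexHull ℝ _ ⟨d', hd', rfl⟩, ?_⟩
    intro i hi
    simpa [projS, hi] using hmono d' d i (hsub i hi)
  obtain ⟨y, hyA, hy⟩ : x ∈ E := convexHull_min hPE hEconv hx
  refine ⟨fun i => ?_, fun i hi => by simp [projS, hi], y, hyA, fun i => ?_⟩
  · by_cases hi : i ∈ S <;> simp [projS, hi, hq0]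
  · by_cases hi : i ∈ S
    · simpa [projS, hi] using (hqx i).trans (hy i hi)
    · simpa [projS, hi] using hAnn y hyA i
end

section
/- Suppose the system satisfies monotonicity in payoffs and subset payoff equivalence. Then int(C) ⊆ R_IB, where int denotes the interior in ℝⁿ. -/
open Finset Set

/-- Subset payoff equivalence: for each nonempty subset S the vectors of P^S lie on
a hyperplane with a nonzero nonnegative normal vector supported on S. -/
def SPE {n : ℕ} (p : Equiv.Perm (Fin n) → Fin n → ℝ) : Prop :=
  ∀ S : Finset (Fin n), S.Nonempty →
    ∃ α : Fin n → ℝ, α ≠ 0 ∧ (∀ i, 0 ≤ α i) ∧ (∀ i, i ∉ S → α i = 0) ∧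
      ∀ d₁ d₂ : Equiv.Perm (Fin n), inDS S d₁ → inDS S d₂ →
        ip α (projS S (p d₁)) = ip α (projS S (p d₂))

namespace Aux6

variable {n : ℕ}





/-- sorting key: `S` first (in `d`-order), then `W \ S` (in value order), then rest. -/
def skey (S W : Finset (Fin n)) (d : Equiv.Perm (Fin n)) : Fin n → ℕ :=
  fun k => if d k ∈ S then (k : ℕ) else if d k ∈ W then n + (d k : ℕ) else 2*n + (d k : ℕ)

def resort (S W : Finset (Fin n)) (d : Equiv.Perm (Fin n)) : Equiv.Perm (Fin n) :=
  (Tuple.sort (skey S W d)).trans d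

lemma resort_apply (S W : Finset (Fin n)) (d : Equiv.Perm (Fin n)) (k : Fin n) :
    resort S W d k = d (Tuple.sort (skey S W d) k) := rfl

lemma skey_injective (S W : Finset (Fin n)) (d : Equiv.Perm (Fin n)) :
    Function.Injective (skey S W d) := by
  intro a b h
  have ha := a.isLt; have hb := b.isLt
  have hda := (d a).isLt; have hdb := (d b).isLt
  unfold skey at h
  split_ifs at h <;>
    first
      | exact Fin.ext h
      | omega
      | exact d.injective (Fin.ext (by omega))

/-- The composed key function is strictly monotone. -/
lemma skey_strictMono (S W : Finset (Fin n)) (d : Equiv.Perm (Fin n)) :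
    StrictMono (skey S W d ∘ Tuple.sort (skey S W d)) :=
  (Tuple.monotone_sort _).strictMono_of_injective
    ((skey_injective S W d).comp (Tuple.sort (skey S W d)).injective)

/-- a permutation whose preimage-of-S is downward closed is in D(S). -/
lemma inDS_of_dc (e : Equiv.Perm (Fin n)) (S : Finset (Fin n))
    (hdc : ∀ k k' : Fin n, k' ≤ k → e k ∈ S → e k' ∈ S) : inDS S e := by
  classical
  intro k
  set A := Finset.univ.filter (fun k => e k ∈ S) with hA
  have hcard : A.card = S.card := by
    have himg : A.image e = S := by
      ext j
      simp only [hA, Finset.mem_image, Finset.mem_filter, Finset.mem_univ, true_and]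
      constructor
      · rintro ⟨a, h, rfl⟩; exact h
      · intro hj; exact ⟨e.symm j, by simp [hj], by simp⟩
    rw [← himg, Finset.card_image_of_injective _ e.injective]
  rw [← hcard]
  constructor
  · intro hk
    have hsub : Finset.Iic k ⊆ A := by
      intro j hj
      simp only [hA, Finset.mem_filter, Finset.mem_univ, true_and]
      exact hdc k j (Finset.mem_Iic.mp hj) hk
    have h1 := Finset.card_le_card hsub
    rw [Fin.card_Iic] at h1
    omega
  · intro hk
    by_contra hkA
    have hsub : A ⊆ Finset.Iio k := by
      intro j hj
      simp only [Finset.mem_Iio]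
      by_contra hjk
      push_neg at hjk
      exact hkA (hdc j k hjk (by simpa [hA] using hj))
    have h1 := Finset.card_le_card hsub
    rw [Fin.card_Iio] at h1
    omega

lemma resort_inDS_left (S W : Finset (Fin n)) (d : Equiv.Perm (Fin n)) :
    inDS S (resort S W d) := by
  apply inDS_of_dc
  intro k k' hk hkS
  have hm := skey_strictMono S W d |>.monotone hk
  simp only [Function.comp_apply] at hm
  set σ := Tuple.sort (skey S W d)
  rw [resort_apply] at hkS ⊢
  have hkey : skey S W d (σ k) = ((σ k : Fin n) : ℕ) := by
    simp only [skey, if_pos (show d (σ k) ∈ S from hkS)]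
  have hlt : skey S W d (σ k) < n := by rw [hkey]; exact (σ k).isLt
  have hlt' : skey S W d (σ k') < n := lt_of_le_of_lt hm hlt
  by_contra hc
  have : n ≤ skey S W d (σ k') := by
    simp only [skey, if_neg (show d (σ k') ∉ S from hc)]
    split_ifs <;> omega
  omega

lemma resort_inDS_right (S W : Finset (Fin n)) (hSW : S ⊆ W) (d : Equiv.Perm (Fin n)) :
    inDS W (resort S W d) := by
  apply inDS_of_dc
  intro k k' hk hkW
  have hm := skey_strictMono S W d |>.monotone hk
  simp only [Function.comp_apply] at hm
  set σ := Tuple.sort (skey S W d)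
  rw [resort_apply] at hkW
  rw [resort_apply]
  have hlt : skey S W d (σ k) < 2*n := by
    have h1 := (σ k).isLt
    have h2 := (d (σ k)).isLt
    simp only [skey]
    split_ifs <;> omega
  have hlt' : skey S W d (σ k') < 2*n := lt_of_le_of_lt hm hlt
  by_contra hc
  have hcS : d (σ k') ∉ S := fun h => hc (hSW h)
  have : 2*n ≤ skey S W d (σ k') := by
    simp only [skey, if_neg hcS, if_neg (show d (σ k') ∉ W from hc)]
    omega
  omega


/-- value-side key. -/
def vkey (S W : Finset (Fin n)) (d : Equiv.Perm (Fin n)) : Fin n → ℕ :=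
  fun j => if j ∈ S then (d.symm j : ℕ) else if j ∈ W then n + (j : ℕ) else 2*n + (j : ℕ)

lemma skey_symm (S W : Finset (Fin n)) (d : Equiv.Perm (Fin n)) (j : Fin n) :
    skey S W d (d.symm j) = vkey S W d j := by
  simp [skey, vkey]

lemma higherSet_resort (S W : Finset (Fin n)) (d : Equiv.Perm (Fin n)) (i : Fin n) :
    higherSet (resort S W d) i = {j | vkey S W d j < vkey S W d i} := by
  ext j
  set σ := Tuple.sort (skey S W d) with hσ
  have hsymm : ∀ x : Fin n, (resort S W d).symm x = σ.symm (d.symm x) := fun x => rfl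
  have hkey : ∀ x : Fin n, (skey S W d ∘ σ) ((resort S W d).symm x) = vkey S W d x := by
    intro x
    rw [hsymm]
    simp only [Function.comp_apply, Equiv.apply_symm_apply]
    exact skey_symm S W d x
  simp only [higherSet, Set.mem_setOf_eq]
  rw [← hkey j, ← hkey i]
  exact ⟨fun h => skey_strictMono S W d (by exact_mod_cast Fin.lt_iff_val_lt_val.mpr h),
    fun h => by
      by_contra hc
      push_neg at hc
      exact absurd ((skey_strictMono S W d).monotone
        (by exact_mod_cast Fin.le_iff_val_le_val.mpr hc)) (not_le.mpr h)⟩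

lemma higherSet_resort_mem (S W : Finset (Fin n)) (d : Equiv.Perm (Fin n)) {i : Fin n}
    (hi : i ∈ S) :
    higherSet (resort S W d) i = {j | j ∈ S ∧ (d.symm j : ℕ) < (d.symm i : ℕ)} := by
  rw [higherSet_resort]
  ext j
  have h1 := (d.symm j).isLt
  have h2 := (d.symm i).isLt
  have h3 := j.isLt
  simp only [Set.mem_setOf_eq, vkey, if_pos hi]
  by_cases hjS : j ∈ S
  · simp [hjS]
  · simp only [hjS, if_false, false_and, iff_false, not_lt]
    split_ifs <;> omega

lemma higherSet_resort_not_mem (S W : Finset (Fin n)) (d : Equiv.Perm (Fin n)) {i : Fin n}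
    (hiW : i ∈ W) (hiS : i ∉ S) :
    higherSet (resort S W d) i = {j | j ∈ S ∨ (j ∈ W ∧ j ∉ S ∧ (j : ℕ) < (i : ℕ))} := by
  rw [higherSet_resort]
  ext j
  have h1 := (d.symm j).isLt
  have h2 := (d.symm i).isLt
  have h3 := j.isLt
  have h4 := i.isLt
  simp only [Set.mem_setOf_eq, vkey, if_neg hiS, if_pos hiW]
  by_cases hjS : j ∈ S
  · simp only [if_pos hjS, hjS, true_or, iff_true, ite_true]; omega
  · by_cases hjW : j ∈ W
    · simp only [if_neg hjS, if_pos hjW, hjS, hjW, false_or, true_and, not_false_iff, ite_true, ite_false]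
      omega
    · simp only [if_neg hjS, if_neg hjW, hjS, hjW, false_or, false_and, and_false, iff_false,
        not_lt, ite_true, ite_false]
      omega



variable {p : Equiv.Perm (Fin n) → Fin n → ℝ}

lemma p_eq_of_higherSet_eq (hmono : Mono p) {d₁ d₂ : Equiv.Perm (Fin n)} {i : Fin n}
    (h : higherSet d₁ i = higherSet d₂ i) : p d₁ i = p d₂ i :=
  le_antisymm (hmono d₂ d₁ i (h ▸ Set.Subset.rfl)) (hmono d₁ d₂ i (h ▸ Set.Subset.rfl))

lemma higherSet_resort_of_inDS {S : Finset (Fin n)} (W : Finset (Fin n))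
    {d : Equiv.Perm (Fin n)} (hd : inDS S d) {i : Fin n} (hi : i ∈ S) :
    higherSet (resort S W d) i = higherSet d i := by
  rw [higherSet_resort_mem S W d hi]
  ext j
  simp only [higherSet, Set.mem_setOf_eq]
  constructor
  · rintro ⟨_, h⟩; exact h
  · intro h
    refine ⟨?_, h⟩
    have hdi : ((d.symm i : Fin n) : ℕ) < S.card := (hd (d.symm i)).mp (by simpa using hi)
    have hj := (hd (d.symm j)).mpr (by omega)
    simpa using hj

lemma ip_projS (W : Finset (Fin n)) (α x : Fin n → ℝ) :
    ip α (projS W x) = ∑ i ∈ W, α i * x i := by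
  unfold ip projS
  simp only [mul_ite, mul_zero]
  rw [Finset.sum_ite_mem, Finset.univ_inter]

/-- Constancy of the weighted `S`-payoff over `D(S)`. -/
lemma sum_S_eq (hmono : Mono p) {W S : Finset (Fin n)} (hSW : S ⊆ W) {α : Fin n → ℝ}
    (hip : ∀ d₁ d₂ : Equiv.Perm (Fin n), inDS W d₁ → inDS W d₂ →
      ip α (projS W (p d₁)) = ip α (projS W (p d₂)))
    {d₁ d₂ : Equiv.Perm (Fin n)} (h₁ : inDS S d₁) (h₂ : inDS S d₂) :
    ∑ i ∈ S, α i * p d₁ i = ∑ i ∈ S, α i * p d₂ i := by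
  have hE := hip (resort S W d₁) (resort S W d₂)
    (resort_inDS_right S W hSW d₁) (resort_inDS_right S W hSW d₂)
  rw [ip_projS, ip_projS, ← Finset.sum_sdiff hSW (f := fun i => α i * p (resort S W d₁) i),
    ← Finset.sum_sdiff hSW (f := fun i => α i * p (resort S W d₂) i)] at hE
  have hA : ∑ i ∈ W \ S, α i * p (resort S W d₁) i = ∑ i ∈ W \ S, α i * p (resort S W d₂) i := by
    refine Finset.sum_congr rfl fun i hi => ?_
    obtain ⟨hiW, hiS⟩ := Finset.mem_sdiff.mp hi
    rw [p_eq_of_higherSet_eq hmono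
      ((higherSet_resort_not_mem S W d₁ hiW hiS).trans
        (higherSet_resort_not_mem S W d₂ hiW hiS).symm)]
  have hB1 : ∑ i ∈ S, α i * p (resort S W d₁) i = ∑ i ∈ S, α i * p d₁ i :=
    Finset.sum_congr rfl fun i hi => by
      rw [p_eq_of_higherSet_eq hmono (higherSet_resort_of_inDS W h₁ hi)]
  have hB2 : ∑ i ∈ S, α i * p (resort S W d₂) i = ∑ i ∈ S, α i * p d₂ i :=
    Finset.sum_congr rfl fun i hi => by
      rw [p_eq_of_higherSet_eq hmono (higherSet_resort_of_inDS W h₂ hi)]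
  rw [hA, hB1, hB2] at hE
  linarith

/-- Points of the convex hull of `P` are dominated, `S`-weighted, by any `d ∈ D(S)`. -/
lemma conv_le (hmono : Mono p) {W S : Finset (Fin n)} (hSW : S ⊆ W) {α : Fin n → ℝ}
    (hα : ∀ i, 0 ≤ α i)
    (hip : ∀ d₁ d₂ : Equiv.Perm (Fin n), inDS W d₁ → inDS W d₂ →
      ip α (projS W (p d₁)) = ip α (projS W (p d₂)))
    {x : Fin n → ℝ} (hx : x ∈ convexHull ℝ (Pfull p))
    {d : Equiv.Perm (Fin n)} (hd : inDS S d) :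
    ∑ i ∈ S, α i * x i ≤ ∑ i ∈ S, α i * p d i := by
  have hlin : IsLinearMap ℝ (fun y : Fin n → ℝ => ∑ i ∈ S, α i * y i) :=
    { map_add := by intro a b; simp [mul_add, Finset.sum_add_distrib]
      map_smul := by intro c a; simp [Finset.mul_sum, smul_eq_mul, mul_left_comm] }
  have : x ∈ {y : Fin n → ℝ | ∑ i ∈ S, α i * y i ≤ ∑ i ∈ S, α i * p d i} := by
    refine convexHull_min ?_ (convex_halfSpace_le hlin _) hx
    rintro y ⟨d'', rfl⟩
    have h1 : ∀ i ∈ S, p d'' i ≤ p (resort S W d'') i := by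
      intro i hi
      apply hmono
      rw [higherSet_resort_mem S W d'' hi]
      intro j hj
      exact hj.2
    calc ∑ i ∈ S, α i * p d'' i
        ≤ ∑ i ∈ S, α i * p (resort S W d'') i :=
          Finset.sum_le_sum fun i hi => mul_le_mul_of_nonneg_left (h1 i hi) (hα i)
      _ = ∑ i ∈ S, α i * p d i := sum_S_eq hmono hSW hip (resort_inDS_left S W d'') hd
  exact this

/-- The main induction. -/
lemma main (hp : ∀ d i, 0 ≤ p d i) (hmono : Mono p) (hspe : SPE p) :
    ∀ W : Finset (Fin n), ∀ q : Fin n → ℝ, ∀ ε : ℝ, 0 < ε → (∀ i, 0 ≤ q i) →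
    (∃ x ∈ convexHull ℝ (Pfull p), ∀ i ∈ W, q i + ε ≤ x i) →
    ∃ α : Fin n → ℝ, (∀ i ∈ W, 0 < α i) ∧
      ∀ S ⊆ W, ∀ d : Equiv.Perm (Fin n), inDS S d →
        ∑ i ∈ S, α i * q i ≤ ∑ i ∈ S, α i * p d i := by
  intro W
  induction W using Finset.strongInduction with
  | _ W IH =>
  intro q ε hε hq hdom
  obtain ⟨x, hx, hxd⟩ := hdom
  classical
  by_cases hW : W.Nonempty
  swap
  · rw [Finset.not_nonempty_iff_eq_empty] at hW
    subst hW
    refine ⟨fun _ => 1, by simp, ?_⟩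
    intro S hS d hd
    rw [Finset.subset_empty.mp hS]
    simp
  obtain ⟨α₀, hα0ne, hα0nn, hα0supp, hα0eq⟩ := hspe W hW
  set Z := W.filter (fun i => α₀ i = 0) with hZdef
  have hZW : Z ⊆ W := Finset.filter_subset _ _
  have hzero : ∀ i ∈ Z, α₀ i = 0 := fun i hi => (Finset.mem_filter.mp hi).2
  have hex : ∃ i₀ ∈ W, α₀ i₀ ≠ 0 := by
    by_contra hc
    push_neg at hc
    apply hα0ne
    funext i
    by_cases hi : i ∈ W
    · exact hc i hi
    · exact hα0supp i hi
  obtain ⟨i₀, hi₀W, hi₀⟩ := hex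
  have hi₀Z : i₀ ∉ Z := fun h => hi₀ (hzero i₀ h)
  have hZss : Z ⊂ W := (Finset.ssubset_iff_of_subset hZW).mpr ⟨i₀, hi₀W, hi₀Z⟩
  obtain ⟨β, hβpos, hβ⟩ := IH Z hZss q ε hε hq ⟨x, hx, fun i hi => hxd i (hZW hi)⟩
  have hWZ : (W \ Z).Nonempty := ⟨i₀, Finset.mem_sdiff.mpr ⟨hi₀W, hi₀Z⟩⟩
  set m := (W \ Z).inf' hWZ α₀ with hm
  have hmpos : 0 < m := by
    rw [hm, Finset.lt_inf'_iff]
    intro i hi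
    obtain ⟨hiW, hiZ⟩ := Finset.mem_sdiff.mp hi
    have hne : α₀ i ≠ 0 := fun h => hiZ (Finset.mem_filter.mpr ⟨hiW, h⟩)
    exact lt_of_le_of_ne (hα0nn i) (Ne.symm hne)
  set B := ∑ i ∈ Z, β i * q i with hB
  have hBnn : 0 ≤ B := Finset.sum_nonneg fun i hi => mul_nonneg (le_of_lt (hβpos i hi)) (hq i)
  set δ := ε * m / (B + 1) with hδ
  have hδpos : 0 < δ := by positivity
  refine ⟨fun i => if i ∈ Z then δ * β i else α₀ i, ?_, ?_⟩
  · intro i hiW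
    by_cases hiZ : i ∈ Z
    · simpa [hiZ] using mul_pos hδpos (hβpos i hiZ)
    · have hne : α₀ i ≠ 0 := by
        intro h
        exact hiZ (Finset.mem_filter.mpr ⟨hiW, h⟩)
      simpa [hiZ] using lt_of_le_of_ne (hα0nn i) (Ne.symm hne)
  · intro S hSW d hd
    have hsplit : ∀ y : Fin n → ℝ,
        ∑ i ∈ S, (if i ∈ Z then δ * β i else α₀ i) * y i
          = (∑ i ∈ S ∩ Z, δ * (β i * y i)) + ∑ i ∈ S \ Z, α₀ i * y i := by
      intro y
      rw [← Finset.sum_filter_add_sum_filter_not S (fun i => i ∈ Z)]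
      congr 1
      · rw [Finset.filter_mem_eq_inter]
        refine Finset.sum_congr rfl fun i hi => ?_
        rw [if_pos (Finset.mem_inter.mp hi).2, mul_assoc]
      · rw [← Finset.sdiff_eq_filter]
        refine Finset.sum_congr rfl fun i hi => ?_
        rw [if_neg (Finset.mem_sdiff.mp hi).2]
    rw [hsplit, hsplit]
    -- the α₀-part with slack ε
    have hzeroS : ∀ y : Fin n → ℝ, ∑ i ∈ S, α₀ i * y i = ∑ i ∈ S \ Z, α₀ i * y i := by
      intro y
      rw [← Finset.sum_filter_add_sum_filter_not S (fun i => i ∈ Z), ← Finset.sdiff_eq_filter]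
      have h0 : ∑ i ∈ S.filter (fun i => i ∈ Z), α₀ i * y i = 0 :=
        Finset.sum_eq_zero fun i hi => by
          rw [hzero i (Finset.mem_filter.mp hi).2, zero_mul]
      rw [h0, zero_add]
    have hA : (∑ i ∈ S \ Z, α₀ i * q i) + ε * ∑ i ∈ S \ Z, α₀ i ≤ ∑ i ∈ S \ Z, α₀ i * p d i := by
      have h1 : ∑ i ∈ S, α₀ i * (q i + ε) ≤ ∑ i ∈ S, α₀ i * x i :=
        Finset.sum_le_sum fun i hi => mul_le_mul_of_nonneg_left (hxd i (hSW hi)) (hα0nn i)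
      have h2 := conv_le hmono hSW hα0nn hα0eq hx hd
      have h3 : ∑ i ∈ S, α₀ i * (q i + ε) = (∑ i ∈ S, α₀ i * q i) + ε * ∑ i ∈ S, α₀ i := by
        rw [Finset.mul_sum]
        rw [← Finset.sum_add_distrib]
        exact Finset.sum_congr rfl fun i _ => by ring
      have h4 : ε * ∑ i ∈ S, α₀ i = ε * ∑ i ∈ S \ Z, α₀ i := by
        congr 1
        have := hzeroS (fun _ => 1)
        simpa using this
      rw [h3, hzeroS q, h4] at h1
      rw [hzeroS (p d)] at h2
      linarith
    -- the Z-part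
    have hZpart : ∑ i ∈ S ∩ Z, δ * (β i * q i)
        ≤ (∑ i ∈ S ∩ Z, δ * (β i * p d i)) + ε * ∑ i ∈ S \ Z, α₀ i := by
      by_cases hcase : S ⊆ Z
      · have hint : S ∩ Z = S := Finset.inter_eq_left.mpr hcase
        have hsd : S \ Z = ∅ := Finset.sdiff_eq_empty_iff_subset.mpr hcase
        rw [hint, hsd]
        simp only [Finset.sum_empty, mul_zero, add_zero]
        rw [← Finset.mul_sum, ← Finset.mul_sum]
        exact mul_le_mul_of_nonneg_left (hβ S hcase d hd) (le_of_lt hδpos)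
      · obtain ⟨i₁, hi₁S, hi₁Z⟩ := Finset.not_subset.mp hcase
        have hi₁ : i₁ ∈ S \ Z := Finset.mem_sdiff.mpr ⟨hi₁S, hi₁Z⟩
        have h5 : m ≤ ∑ i ∈ S \ Z, α₀ i := by
          refine le_trans (Finset.inf'_le α₀ ?_) (Finset.single_le_sum (fun i _ => hα0nn i) hi₁)
          exact Finset.mem_sdiff.mpr ⟨hSW hi₁S, hi₁Z⟩
        have h6 : ∑ i ∈ S ∩ Z, δ * (β i * q i) ≤ δ * B := by
          rw [← Finset.mul_sum]
          refine mul_le_mul_of_nonneg_left ?_ (le_of_lt hδpos)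
          refine Finset.sum_le_sum_of_subset_of_nonneg Finset.inter_subset_right ?_
          intro i hi _
          exact mul_nonneg (le_of_lt (hβpos i hi)) (hq i)
        have h7 : δ * B ≤ ε * m := by
          rw [hδ]
          rw [div_mul_eq_mul_div, div_le_iff₀ (by linarith)]
          nlinarith
        have h8 : 0 ≤ ∑ i ∈ S ∩ Z, δ * (β i * p d i) :=
          Finset.sum_nonneg fun i hi =>
            mul_nonneg (le_of_lt hδpos)
              (mul_nonneg (le_of_lt (hβpos i (Finset.mem_inter.mp hi).2)) (hp d i))
        have h9 : ε * m ≤ ε * ∑ i ∈ S \ Z, α₀ i := mul_le_mul_of_nonneg_left h5 (le_of_lt hε)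
        linarith
    linarith

end Aux6

theorem stmt6 {n : ℕ} (hn : 1 ≤ n)
    (p : Equiv.Perm (Fin n) → Fin n → ℝ) (hp : ∀ d i, 0 ≤ p d i)
    (hmono : Mono p) (hspe : SPE p) :
    interior (Cfull p) ⊆ RIB p := by
  intro q hq
  have hqC : q ∈ Cfull p := interior_subset hq
  obtain ⟨hq0, -⟩ := hqC
  rw [mem_interior_iff_mem_nhds, Metric.mem_nhds_iff] at hq
  obtain ⟨ε, hε, hball⟩ := hq
  have hq' : (fun i => q i + ε/2) ∈ Cfull p := by
    apply hball
    rw [Metric.mem_ball, dist_pi_lt_iff hε]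
    intro i
    simp only [Real.dist_eq, add_sub_cancel_left]
    rw [abs_of_pos (by linarith)]
    linarith
  obtain ⟨-, x, hx, hxd⟩ := hq'
  obtain ⟨α, hαpos, hαineq⟩ := Aux6.main hp hmono hspe Finset.univ q (ε/2) (by linarith) hq0
    ⟨x, hx, fun i _ => hxd i⟩
  exact ⟨hq0, α, fun i => hαpos i (Finset.mem_univ i),
    fun S d hd => hαineq S (Finset.subset_univ S) d hd⟩
end

section
/- Suppose n = 2 and the system satisfies monotonicity in payoffs. Then int(C) ⊆ R_IB, where int denotes the interior in ℝ². -/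
open Finset Set

lemma interior_lt_aux {K : Set (Fin 2 → ℝ)} {q : Fin 2 → ℝ} (i : Fin 2) {c : ℝ}
    (hK : ∀ r ∈ K, r i ≤ c) (hq : q ∈ interior K) : q i < c := by
  obtain ⟨ε, hε, hball⟩ := Metric.isOpen_iff.mp isOpen_interior q hq
  have hmem : Function.update q i (q i + ε / 2) ∈ Metric.ball q ε := by
    rw [Metric.mem_ball, dist_pi_lt_iff hε]
    intro j
    rcases eq_or_ne j i with rfl | hji
    · rw [Function.update_self, Real.dist_eq]
      rw [show q j + ε / 2 - q j = ε / 2 by ring, abs_of_pos (by linarith)]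
      linarith
    · rw [Function.update_of_ne hji, dist_self]
      exact hε
  have h := hK _ (interior_subset (hball hmem))
  rw [Function.update_self] at h
  linarith

lemma exists_alpha_aux (a0 a1 b0 b1 q0 q1 s t : ℝ)
    (hba0 : b0 ≤ a0) (hab1 : a1 ≤ b1)
    (hs : 0 ≤ s) (ht : 0 ≤ t) (hst : s + t = 1)
    (hx0 : q0 ≤ s * a0 + t * b0) (hx1 : q1 ≤ s * a1 + t * b1)
    (hq0 : q0 < a0) (hq1 : q1 < b1) :
    ∃ α0 α1 : ℝ, 0 < α0 ∧ 0 < α1 ∧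
      α0 * q0 + α1 * q1 ≤ α0 * a0 + α1 * a1 ∧
      α0 * q0 + α1 * q1 ≤ α0 * b0 + α1 * b1 := by
  have hs1 : s = 1 - t := by linarith
  subst hs1
  rcases le_or_gt q1 a1 with h1 | h1
  · rcases le_or_gt q0 b0 with h0 | h0
    · exact ⟨1, 1, one_pos, one_pos, by nlinarith, by nlinarith⟩
    · refine ⟨b1 - q1, q0 - b0, by linarith, by linarith, ?_, by nlinarith⟩
      nlinarith [mul_nonneg (by linarith : (0:ℝ) ≤ b1 - q1) (by linarith : (0:ℝ) ≤ a0 - q0),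
        mul_nonneg (by linarith : (0:ℝ) ≤ q0 - b0) (by linarith : (0:ℝ) ≤ a1 - q1)]
  · refine ⟨q1 - a1, a0 - q0, by linarith, by linarith, by nlinarith, ?_⟩
    rcases le_or_gt q0 b0 with h0 | h0
    · nlinarith [mul_nonneg (by linarith : (0:ℝ) ≤ q1 - a1) (by linarith : (0:ℝ) ≤ b0 - q0),
        mul_pos (by linarith : (0:ℝ) < a0 - q0) (by linarith : (0:ℝ) < b1 - q1)]
    · have e1 : q1 - a1 ≤ t * (b1 - a1) := by nlinarith
      have e2 : q0 - b0 ≤ (1 - t) * (a0 - b0) := by nlinarith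
      have e3 : t * (a0 - b0) ≤ a0 - q0 := by nlinarith
      have e4 : (1 - t) * (b1 - a1) ≤ b1 - q1 := by nlinarith
      have p1 : (q1 - a1) * (q0 - b0) ≤ (t * (b1 - a1)) * ((1 - t) * (a0 - b0)) :=
        mul_le_mul e1 e2 (by linarith) (by linarith)
      have p2 : (t * (a0 - b0)) * ((1 - t) * (b1 - a1)) ≤ (a0 - q0) * (b1 - q1) :=
        mul_le_mul e3 e4 (mul_nonneg (by linarith) (by linarith)) (by linarith)
      nlinarith [p1, p2]


theorem stmt7 (p : Equiv.Perm (Fin 2) → Fin 2 → ℝ) (hp : ∀ d i, 0 ≤ p d i)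
    (hmono : Mono p) :
    interior (Cfull p) ⊆ RIB p := by
  intro q hq
  have hqC := interior_subset hq
  obtain ⟨hqnn, x, hxh, hqx⟩ := hqC
  have hperm : ∀ d : Equiv.Perm (Fin 2), d = 1 ∨ d = Equiv.swap 0 1 := by decide
  have hsub : Pfull p ⊆ {p 1, p (Equiv.swap 0 1)} := by
    rintro _ ⟨d, rfl⟩
    rcases hperm d with rfl | rfl
    · exact Or.inl rfl
    · exact Or.inr rfl
  have hseg : ∀ y ∈ convexHull ℝ (Pfull p), ∃ s t : ℝ, 0 ≤ s ∧ 0 ≤ t ∧ s + t = 1 ∧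
      ∀ i, y i = s * p 1 i + t * p (Equiv.swap 0 1) i := by
    intro y hy
    have hy' : y ∈ segment ℝ (p 1) (p (Equiv.swap 0 1)) := by
      rw [← convexHull_pair]; exact convexHull_mono hsub hy
    obtain ⟨s, t, hs, ht, hst, hy2⟩ := hy'
    refine ⟨s, t, hs, ht, hst, fun i => ?_⟩
    rw [← hy2]
    simp [mul_comm]
  have hba0 : p (Equiv.swap 0 1) 0 ≤ p 1 0 := by
    apply hmono 1 (Equiv.swap 0 1) 0
    intro j hj
    have h' : ((1 : Equiv.Perm (Fin 2)).symm j : ℕ) <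
        (((1 : Equiv.Perm (Fin 2)).symm 0) : ℕ) := hj
    change (j : ℕ) < ((0 : Fin 2) : ℕ) at h'
    simp at h'
  have hab1 : p 1 1 ≤ p (Equiv.swap 0 1) 1 := by
    apply hmono (Equiv.swap 0 1) 1 1
    intro j hj
    have h' : (((Equiv.swap 0 1 : Equiv.Perm (Fin 2)).symm j : Fin 2) : ℕ) <
        ((((Equiv.swap 0 1 : Equiv.Perm (Fin 2)).symm 1) : Fin 2) : ℕ) := hj
    simp [Equiv.symm_swap, Equiv.swap_apply_right] at h'
  have hCb : ∀ (i : Fin 2) (c : ℝ), p 1 i ≤ c → p (Equiv.swap 0 1) i ≤ c →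
      ∀ r ∈ Cfull p, r i ≤ c := by
    intro i c h1 h2 r hr
    obtain ⟨-, y, hy, hry⟩ := hr
    obtain ⟨s, t, hs, ht, hst, hyi⟩ := hseg y hy
    have h := hry i
    rw [hyi i] at h
    have hc : s * c + t * c = c := by rw [← add_mul, hst, one_mul]
    nlinarith [mul_le_mul_of_nonneg_left h1 hs, mul_le_mul_of_nonneg_left h2 ht]
  have hq0lt : q 0 < p 1 0 := interior_lt_aux 0 (hCb 0 _ le_rfl hba0) hq
  have hq1lt : q 1 < p (Equiv.swap 0 1) 1 := interior_lt_aux 1 (hCb 1 _ hab1 le_rfl) hq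
  obtain ⟨s, t, hs, ht, hst, hxi⟩ := hseg x hxh
  have hx0 : q 0 ≤ s * p 1 0 + t * p (Equiv.swap 0 1) 0 := by
    have := hqx 0; rw [hxi 0] at this; exact this
  have hx1 : q 1 ≤ s * p 1 1 + t * p (Equiv.swap 0 1) 1 := by
    have := hqx 1; rw [hxi 1] at this; exact this
  obtain ⟨α0, α1, hα0, hα1, hA, hB⟩ := exists_alpha_aux (p 1 0) (p 1 1)
    (p (Equiv.swap 0 1) 0) (p (Equiv.swap 0 1) 1) (q 0) (q 1) s t
    hba0 hab1 hs ht hst hx0 hx1 hq0lt hq1lt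
  refine ⟨hqnn, ![α0, α1], ?_, ?_⟩
  · intro i; fin_cases i <;> simpa
  · intro S d hd
    have hS : S = ∅ ∨ S = {0} ∨ S = {1} ∨ S = Finset.univ :=
      (by decide : ∀ T : Finset (Fin 2), T = ∅ ∨ T = {0} ∨ T = {1} ∨ T = Finset.univ) S
    rcases hS with rfl | rfl | rfl | rfl
    · simp
    · have hd1 : d = 1 := by
        rcases hperm d with rfl | rfl
        · rfl
        · exfalso
          simp only [inDS] at hd
          exact absurd (hd 0) (by decide)
      subst hd1
      simp only [Finset.sum_singleton, Matrix.cons_val_zero]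
      exact mul_le_mul_of_nonneg_left hq0lt.le hα0.le
    · have hd1 : d = Equiv.swap 0 1 := by
        rcases hperm d with rfl | rfl
        · exfalso
          simp only [inDS] at hd
          exact absurd (hd 0) (by decide)
        · rfl
      subst hd1
      simp only [Finset.sum_singleton, Matrix.cons_val_one, Matrix.head_cons]
      exact mul_le_mul_of_nonneg_left hq1lt.le hα1.le
    · rcases hperm d with rfl | rfl <;>
        simp only [Fin.sum_univ_two, Matrix.cons_val_zero, Matrix.cons_val_one,
          Matrix.head_cons]
      · exact hA
      · exact hB
end

section
/- Suppose all users have exchangeable expected payoffs. Then the system satisfies subset payoff equivalence with the all-ones weights: for every subset S ⊆ N and all priority decisions d₁, d₂ ∈ D(S), Σ_{i∈S} p_i(d₁) = Σ_{i∈S} p_i(d₂). -/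
open Finset Set

/-- Exchangeable expected payoffs: swapping the priorities of users i and j
swaps their expected payoffs and leaves every other user's payoff unchanged. -/
def Exch {n : ℕ} (p : Equiv.Perm (Fin n) → Fin n → ℝ) : Prop :=
  ∀ (d : Equiv.Perm (Fin n)) (i j : Fin n),
    (∀ k, k ≠ i → k ≠ j → p (d.trans (Equiv.swap i j)) k = p d k) ∧
    p (d.trans (Equiv.swap i j)) i = p d j ∧
    p (d.trans (Equiv.swap i j)) j = p d i


lemma exch_perm {n : ℕ} {p : Equiv.Perm (Fin n) → Fin n → ℝ} (hexch : Exch p)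
    (σ : Equiv.Perm (Fin n)) : ∀ d k, p (d.trans σ) k = p d (σ⁻¹ k) := by
  induction σ using Equiv.Perm.swap_induction_on
  case _ => intro d k; rw [Equiv.Perm.one_def, Equiv.trans_refl]; simp
  case _ f i j hij ih =>
    intro d k
    have h1 : d.trans (Equiv.swap i j * f) = (d.trans f).trans (Equiv.swap i j) := by
      ext x; rfl
    rw [h1]
    have hs : p ((d.trans f).trans (Equiv.swap i j)) k = p (d.trans f) (Equiv.swap i j k) := by
      obtain ⟨ho, hi, hj⟩ := hexch (d.trans f) i j
      by_cases hki : k = i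
      · subst hki; rw [hi, Equiv.swap_apply_left]
      by_cases hkj : k = j
      · subst hkj; rw [hj, Equiv.swap_apply_right]
      · rw [ho k hki hkj, Equiv.swap_apply_of_ne_of_ne hki hkj]
    rw [hs, ih]
    congr 1

theorem stmt9 {n : ℕ} (hn : 1 ≤ n)
    (p : Equiv.Perm (Fin n) → Fin n → ℝ) (hp : ∀ d i, 0 ≤ p d i)
    (hexch : Exch p) :
    ∀ S : Finset (Fin n), ∀ d₁ d₂ : Equiv.Perm (Fin n), inDS S d₁ → inDS S d₂ →
      ∑ i ∈ S, p d₁ i = ∑ i ∈ S, p d₂ i := by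
  intro S d₁ d₂ h₁ h₂
  set σ : Equiv.Perm (Fin n) := d₁.symm.trans d₂ with hσ
  have hd₂ : d₂ = d₁.trans σ := by ext x; simp [hσ]
  have key : ∀ k, p d₂ k = p d₁ (σ⁻¹ k) := by
    intro k; rw [hd₂]; exact exch_perm hexch σ d₁ k
  have hσinv : ∀ i ∈ S, σ⁻¹ i ∈ S := by
    intro i hi
    have : σ⁻¹ i = d₁ (d₂.symm i) := by simp [hσ, Equiv.Perm.inv_def]
    rw [this, h₁]
    have := (h₂ (d₂.symm i)).mpr
    have h3 : (d₂.symm i : ℕ) < S.card := by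
      have := (h₂ (d₂.symm i)).mp (by simpa using hi)
      exact this
    exact h3
  rw [show (∑ i ∈ S, p d₂ i) = ∑ i ∈ S, p d₁ (σ⁻¹ i) from Finset.sum_congr rfl (fun i _ => key i)]
  exact (Finset.sum_bij (fun i _ => σ⁻¹ i) (fun i hi => hσinv i hi)
    (fun a _ b _ h => σ⁻¹.injective h)
    (fun b hb => ⟨σ b, by
      have : σ b = d₂ (d₁.symm b) := by simp [hσ]
      rw [this, h₂]
      exact (h₁ (d₁.symm b)).mp (by simpa using hb), by simp⟩)
    (fun a _ => rfl)).symm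
end

section
/- Suppose all users have exchangeable expected payoffs and the system satisfies monotonicity in payoffs. Then int(C) ⊆ R_IB, where int denotes the interior in ℝⁿ. -/
open Finset Set

section AuxStmt10

variable {n : ℕ} {p : Equiv.Perm (Fin n) → Fin n → ℝ}

lemma pexch10 (hexch : Exch p) (d : Equiv.Perm (Fin n)) (i j m : Fin n) :
    p (d.trans (Equiv.swap i j)) m = p d (Equiv.swap i j m) := by
  rcases eq_or_ne m i with rfl | hmi
  · rw [Equiv.swap_apply_left]; exact (hexch d m j).2.1
  rcases eq_or_ne m j with rfl | hmj
  · rw [Equiv.swap_apply_right]; exact (hexch d i m).2.2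
  · rw [Equiv.swap_apply_of_ne_of_ne hmi hmj]; exact (hexch d i j).1 m hmi hmj

lemma swap_mem_iff10 {S : Finset (Fin n)} {i j : Fin n} (h : i ∈ S ↔ j ∈ S) (m : Fin n) :
    Equiv.swap i j m ∈ S ↔ m ∈ S := by
  rcases eq_or_ne m i with rfl | hmi
  · rw [Equiv.swap_apply_left]; exact h.symm
  rcases eq_or_ne m j with rfl | hmj
  · rw [Equiv.swap_apply_right]; exact h
  · rw [Equiv.swap_apply_of_ne_of_ne hmi hmj]

lemma gswap10 (hexch : Exch p) {S : Finset (Fin n)} {i j : Fin n} (h : i ∈ S ↔ j ∈ S)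
    (d : Equiv.Perm (Fin n)) :
    ∑ m ∈ S, p (d.trans (Equiv.swap i j)) m = ∑ m ∈ S, p d m := by
  refine Finset.sum_equiv (Equiv.swap i j) (fun m => (swap_mem_iff10 h m).symm) ?_
  exact fun m _ => pexch10 hexch d i j m

lemma gstep10 (hexch : Exch p) (hmono : Mono p) {S : Finset (Fin n)} {i j : Fin n}
    (hi : i ∉ S) (hj : j ∈ S) (d : Equiv.Perm (Fin n))
    (hlt : (d.symm i : ℕ) < (d.symm j : ℕ)) :
    ∑ m ∈ S, p d m ≤ ∑ m ∈ S, p (d.trans (Equiv.swap i j)) m := by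
  refine Finset.sum_le_sum fun m hm => ?_
  have hmi : m ≠ i := fun h => hi (h ▸ hm)
  rcases eq_or_ne m j with rfl | hmj
  · refine hmono _ d m ?_
    intro x hx
    simp only [higherSet, Set.mem_setOf_eq, Equiv.symm_trans_apply, Equiv.symm_swap] at hx ⊢
    rcases eq_or_ne x i with rfl | hxi
    · exact hlt
    rcases eq_or_ne x m with rfl | hxm
    · rw [Equiv.swap_apply_right] at hx; omega
    · rw [Equiv.swap_apply_of_ne_of_ne hxi hxm, Equiv.swap_apply_right] at hx
      exact hx.trans hlt
  · exact le_of_eq ((hexch d i j).1 m hmi hmj).symm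

lemma card_filter_lt10 {c : ℕ} (h : c ≤ n) :
    (Finset.univ.filter fun k : Fin n => (k : ℕ) < c).card = c := by
  have : (Finset.univ.filter fun k : Fin n => (k : ℕ) < c) =
      (Finset.range c).attachFin (fun m hm => lt_of_lt_of_le (Finset.mem_range.mp hm) h) := by
    ext k
    simp [Finset.mem_attachFin]
  rw [this, Finset.card_attachFin, Finset.card_range]

lemma card_filter_mem10 (S : Finset (Fin n)) (d : Equiv.Perm (Fin n)) :
    (Finset.univ.filter fun l : Fin n => d l ∈ S).card = S.card := by
  have : (Finset.univ.filter fun l : Fin n => d l ∈ S) = S.image d.symm := by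
    ext l
    simp only [Finset.mem_filter, Finset.mem_univ, true_and, Finset.mem_image]
    constructor
    · exact fun h => ⟨d l, h, d.symm_apply_apply l⟩
    · rintro ⟨m, hm, rfl⟩; rwa [d.apply_symm_apply]
  rw [this, Finset.card_image_of_injective _ d.symm.injective]

lemma inDS_of_forall10 {S : Finset (Fin n)} {d : Equiv.Perm (Fin n)}
    (h : ∀ k : Fin n, (k : ℕ) < S.card → d k ∈ S) : inDS S d := by
  have hcS : S.card ≤ n := le_trans (Finset.card_le_univ S) (by simp)
  have hsub : (Finset.univ.filter fun k : Fin n => (k : ℕ) < S.card) ⊆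
      (Finset.univ.filter fun l : Fin n => d l ∈ S) := by
    intro k hk
    simp only [Finset.mem_filter, Finset.mem_univ, true_and] at hk ⊢
    exact h k hk
  have heq := Finset.eq_of_subset_of_card_le hsub
    (by rw [card_filter_mem10 S d, card_filter_lt10 hcS])
  intro k
  constructor
  · intro hk
    have hk2 : k ∈ (Finset.univ.filter fun l : Fin n => d l ∈ S) := by simp [hk]
    rw [← heq] at hk2
    simpa using hk2
  · exact h k

lemma exists_inDS_ge10 (hexch : Exch p) (hmono : Mono p) (S : Finset (Fin n)) :
    ∀ N : ℕ, ∀ d' : Equiv.Perm (Fin n),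
      (Finset.univ.filter fun k : Fin n => (k : ℕ) < S.card ∧ d' k ∉ S).card = N →
      ∃ d, inDS S d ∧ ∑ m ∈ S, p d' m ≤ ∑ m ∈ S, p d m := by
  intro N
  induction N using Nat.strong_induction_on with
  | _ N ih =>
  intro d' hN
  by_cases hbad : (Finset.univ.filter fun k : Fin n => (k : ℕ) < S.card ∧ d' k ∉ S) = ∅
  · refine ⟨d', inDS_of_forall10 ?_, le_refl _⟩
    intro k hk
    by_contra hkS
    have hkmem : k ∈ (Finset.univ.filter fun k : Fin n => (k : ℕ) < S.card ∧ d' k ∉ S) := by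
      simp [hk, hkS]
    rw [hbad] at hkmem
    exact absurd hkmem (Finset.notMem_empty k)
  · obtain ⟨k, hk⟩ := Finset.nonempty_iff_ne_empty.mpr hbad
    simp only [Finset.mem_filter, Finset.mem_univ, true_and] at hk
    obtain ⟨hkrank, hkS⟩ := hk
    have hex : ∃ l : Fin n, ¬((l : ℕ) < S.card) ∧ d' l ∈ S := by
      by_contra hco
      push_neg at hco
      have hall : ∀ l : Fin n, d' l ∈ S → (l : ℕ) < S.card := by
        intro l hl
        by_contra hnl
        exact absurd hl (hco l (Nat.le_of_not_lt hnl))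
      have hsub : (Finset.univ.filter fun l : Fin n => d' l ∈ S) ⊆
          (Finset.univ.filter fun k : Fin n => (k : ℕ) < S.card) := by
        intro l hl
        simp only [Finset.mem_filter, Finset.mem_univ, true_and] at hl ⊢
        exact hall l hl
      have hcS : S.card ≤ n := le_trans (Finset.card_le_univ S) (by simp)
      have heq := Finset.eq_of_subset_of_card_le hsub
        (by rw [card_filter_mem10 S d', card_filter_lt10 hcS])
      have hk3 : k ∈ (Finset.univ.filter fun l : Fin n => d' l ∈ S) := by
        rw [heq]; simp [hkrank]
      simp only [Finset.mem_filter, Finset.mem_univ, true_and] at hk3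
      exact hkS hk3
    obtain ⟨l, hl, hlS⟩ := hex
    have hkl : k ≠ l := by
      intro h; rw [h] at hkrank; exact hl hkrank
    have hsymk : d'.symm (d' k) = k := d'.symm_apply_apply k
    have hsyml : d'.symm (d' l) = l := d'.symm_apply_apply l
    have hlt : ((d'.symm (d' k) : Fin n) : ℕ) < ((d'.symm (d' l) : Fin n) : ℕ) := by
      rw [hsymk, hsyml]; omega
    have hstep := gstep10 hexch hmono hkS hlS d' hlt
    set d'' := d'.trans (Equiv.swap (d' k) (d' l)) with hd''
    have hsubbad : (Finset.univ.filter fun m : Fin n => (m : ℕ) < S.card ∧ d'' m ∉ S) ⊆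
        (Finset.univ.filter fun m : Fin n => (m : ℕ) < S.card ∧ d' m ∉ S).erase k := by
      intro m hm
      simp only [Finset.mem_filter, Finset.mem_univ, true_and] at hm
      obtain ⟨hm1, hm2⟩ := hm
      have hmk : m ≠ k := by
        intro h
        apply hm2
        rw [h]
        show Equiv.swap (d' k) (d' l) (d' k) ∈ S
        rw [Equiv.swap_apply_left]
        exact hlS
      have hml : m ≠ l := by
        intro h; rw [h] at hm1; exact hl hm1
      rw [Finset.mem_erase]
      refine ⟨hmk, ?_⟩
      simp only [Finset.mem_filter, Finset.mem_univ, true_and]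
      refine ⟨hm1, ?_⟩
      intro hmS
      apply hm2
      show Equiv.swap (d' k) (d' l) (d' m) ∈ S
      rw [Equiv.swap_apply_of_ne_of_ne (fun h => hmk (d'.injective h))
        (fun h => hml (d'.injective h))]
      exact hmS
    have hkmem : k ∈ (Finset.univ.filter fun m : Fin n => (m : ℕ) < S.card ∧ d' m ∉ S) := by
      simp [hkrank, hkS]
    have hcard : (Finset.univ.filter fun m : Fin n => (m : ℕ) < S.card ∧ d'' m ∉ S).card < N := by
      calc (Finset.univ.filter fun m : Fin n => (m : ℕ) < S.card ∧ d'' m ∉ S).card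
          ≤ ((Finset.univ.filter fun m : Fin n => (m : ℕ) < S.card ∧ d' m ∉ S).erase k).card :=
            Finset.card_le_card hsubbad
        _ < (Finset.univ.filter fun m : Fin n => (m : ℕ) < S.card ∧ d' m ∉ S).card :=
            Finset.card_erase_lt_of_mem hkmem
        _ = N := hN
    obtain ⟨d, hd, hle⟩ := ih _ hcard d'' rfl
    exact ⟨d, hd, le_trans hstep hle⟩

lemma inDS_const10 (hexch : Exch p) (S : Finset (Fin n)) :
    ∀ N : ℕ, ∀ d₁ d₂ : Equiv.Perm (Fin n),
      (Finset.univ.filter fun m : Fin n => d₁ m ≠ d₂ m).card = N →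
      inDS S d₁ → inDS S d₂ →
      ∑ m ∈ S, p d₁ m = ∑ m ∈ S, p d₂ m := by
  intro N
  induction N using Nat.strong_induction_on with
  | _ N ih =>
  intro d₁ d₂ hN h1 h2
  by_cases hD : (Finset.univ.filter fun m : Fin n => d₁ m ≠ d₂ m) = ∅
  · have : d₁ = d₂ := by
      apply Equiv.ext
      intro k
      by_contra h
      have hk : k ∈ (Finset.univ.filter fun m : Fin n => d₁ m ≠ d₂ m) := by simp [h]
      rw [hD] at hk
      exact absurd hk (Finset.notMem_empty k)
    rw [this]
  · obtain ⟨k, hk⟩ := Finset.nonempty_iff_ne_empty.mpr hD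
    simp only [Finset.mem_filter, Finset.mem_univ, true_and] at hk
    have hclass : d₁ k ∈ S ↔ d₂ k ∈ S := (h1 k).trans (h2 k).symm
    set d₁' := d₁.trans (Equiv.swap (d₁ k) (d₂ k)) with hd₁'
    have hsum : ∑ m ∈ S, p d₁' m = ∑ m ∈ S, p d₁ m := gswap10 hexch hclass d₁
    have h1' : inDS S d₁' := by
      intro m
      have hm : d₁' m = Equiv.swap (d₁ k) (d₂ k) (d₁ m) := rfl
      rw [hm, swap_mem_iff10 hclass]
      exact h1 m
    have hsub : (Finset.univ.filter fun m : Fin n => d₁' m ≠ d₂ m) ⊆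
        (Finset.univ.filter fun m : Fin n => d₁ m ≠ d₂ m).erase k := by
      intro m hm
      simp only [Finset.mem_filter, Finset.mem_univ, true_and] at hm
      have hmk : m ≠ k := by
        intro h
        apply hm
        rw [h]
        show Equiv.swap (d₁ k) (d₂ k) (d₁ k) = d₂ k
        rw [Equiv.swap_apply_left]
      rw [Finset.mem_erase]
      refine ⟨hmk, ?_⟩
      simp only [Finset.mem_filter, Finset.mem_univ, true_and]
      intro heq
      apply hm
      show Equiv.swap (d₁ k) (d₂ k) (d₁ m) = d₂ m
      have hne1 : d₁ m ≠ d₁ k := fun h => hmk (d₁.injective h)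
      have hne2 : d₁ m ≠ d₂ k := by
        rw [heq]
        intro h
        have := d₂.injective h
        rw [this] at heq
        exact hk heq
      rw [Equiv.swap_apply_of_ne_of_ne hne1 hne2]
      exact heq
    have hkmem : k ∈ (Finset.univ.filter fun m : Fin n => d₁ m ≠ d₂ m) := by simp [hk]
    have hcard : (Finset.univ.filter fun m : Fin n => d₁' m ≠ d₂ m).card < N := by
      calc (Finset.univ.filter fun m : Fin n => d₁' m ≠ d₂ m).card
          ≤ ((Finset.univ.filter fun m : Fin n => d₁ m ≠ d₂ m).erase k).card :=
            Finset.card_le_card hsub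
        _ < (Finset.univ.filter fun m : Fin n => d₁ m ≠ d₂ m).card :=
            Finset.card_erase_lt_of_mem hkmem
        _ = N := hN
    have := ih _ hcard d₁' d₂ rfl h1' h2
    rw [← hsum]
    exact this

lemma key10 (hexch : Exch p) (hmono : Mono p) (S : Finset (Fin n))
    (d : Equiv.Perm (Fin n)) (hd : inDS S d) (d' : Equiv.Perm (Fin n)) :
    ∑ m ∈ S, p d' m ≤ ∑ m ∈ S, p d m := by
  obtain ⟨d₀, hd₀, hle⟩ := exists_inDS_ge10 hexch hmono S _ d' rfl
  calc ∑ m ∈ S, p d' m ≤ ∑ m ∈ S, p d₀ m := hle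
    _ = ∑ m ∈ S, p d m := inDS_const10 hexch S _ d₀ d rfl hd₀ hd

end AuxStmt10


theorem stmt10 {n : ℕ} (hn : 1 ≤ n)
    (p : Equiv.Perm (Fin n) → Fin n → ℝ) (hp : ∀ d i, 0 ≤ p d i)
    (hexch : Exch p) (hmono : Mono p) :
    interior (Cfull p) ⊆ RIB p := by
  intro q hq
  obtain ⟨hq0, x, hx, hqx⟩ := interior_subset hq
  refine ⟨hq0, fun _ => 1, fun _ => one_pos, ?_⟩
  intro S d hd
  simp only [one_mul]
  have h1 : ∑ i ∈ S, q i ≤ ∑ i ∈ S, x i := Finset.sum_le_sum fun i _ => hqx i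
  have h2 : ∑ i ∈ S, x i ≤ ∑ i ∈ S, p d i := by
    have hconv : convexHull ℝ (Pfull p) ⊆ {y : Fin n → ℝ | ∑ i ∈ S, y i ≤ ∑ i ∈ S, p d i} := by
      apply convexHull_min
      · rintro y ⟨d', rfl⟩
        exact key10 hexch hmono S d hd d'
      · exact convex_halfSpace_le
          ⟨fun a b => Finset.sum_add_distrib,
           fun c a => by simp [Finset.mul_sum, smul_eq_mul]⟩ _
    exact hconv hx
  linarith
end

section
/- Let α, w ∈ ℝⁿ with α_i > 0 and w_i > 0 for all i, let q, x, v ∈ ℝⁿ with q ⪰ 0, x ⪰ 0, v ⪰ 0, and let d : Fin n ≃ Fin n be a bijection such that w_{d(1)} x_{d(1)} ≥ w_{d(2)} x_{d(2)} ≥ ⋯ ≥ w_{d(n)} x_{d(n)}. Suppose that for every k ∈ {1, …, n}, Σ_{j=1}^{k} α_{d(j)} q_{d(j)} ≤ Σ_{j=1}^{k} α_{d(j)} v_{d(j)}. Then Σ_{i=1}^{n} α_i w_i x_i (q_i − v_i) ≤ 0. -/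
open Finset Set

theorem stmt11 {n : ℕ} (hn : 1 ≤ n) (α w q x v : Fin n → ℝ)
    (hα : ∀ i, 0 < α i) (hw : ∀ i, 0 < w i)
    (hq : ∀ i, 0 ≤ q i) (hx : ∀ i, 0 ≤ x i) (hv : ∀ i, 0 ≤ v i)
    (d : Equiv.Perm (Fin n))
    (hsort : ∀ k l : Fin n, k ≤ l → w (d l) * x (d l) ≤ w (d k) * x (d k))
    (hprefix : ∀ k : Fin n,
      ∑ j ∈ Finset.univ.filter (fun j : Fin n => j ≤ k), α (d j) * q (d j) ≤
      ∑ j ∈ Finset.univ.filter (fun j : Fin n => j ≤ k), α (d j) * v (d j)) :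
    ∑ i, α i * w i * x i * (q i - v i) ≤ 0 := by
  classical
  set f : ℕ → ℝ := fun j => if h : j < n then
      α (d ⟨j, h⟩) * (q (d ⟨j, h⟩) - v (d ⟨j, h⟩)) else 0 with hf
  set g : ℕ → ℝ := fun j => if h : j < n then w (d ⟨j, h⟩) * x (d ⟨j, h⟩) else 0 with hg
  have hg0 : ∀ j, 0 ≤ g j := by
    intro j; simp only [hg]
    split_ifs with h
    · exact mul_nonneg (hw _).le (hx _)
    · exact le_rfl
  have hgmono : ∀ i j : ℕ, i ≤ j → g j ≤ g i := by
    intro i j hij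
    simp only [hg]
    split_ifs with h1 h2 h2
    · exact hsort ⟨i, h2⟩ ⟨j, h1⟩ hij
    · omega
    · exact mul_nonneg (hw _).le (hx _)
    · exact le_rfl
  -- prefix sums of f are nonpositive
  have hsumconv : ∀ (u : Fin n → ℝ) (k : ℕ) (hk : k < n),
      ∑ j ∈ Finset.range (k+1), (if h : j < n then u (d ⟨j, h⟩) else 0) =
      ∑ j ∈ Finset.univ.filter (fun j : Fin n => j ≤ (⟨k, hk⟩ : Fin n)), u (d j) := by
    intro u k hk
    refine Finset.sum_nbij' (fun a => (⟨min a k, by omega⟩ : Fin n))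
      (fun b => (b : ℕ)) ?_ ?_ ?_ ?_ ?_
    · intro a ha
      have := Finset.mem_range.mp ha
      simp only [Finset.mem_filter, Finset.mem_univ, true_and]
      exact Fin.mk_le_mk.mpr (min_le_right _ _)
    · intro b hb
      have hbk : (b : ℕ) ≤ k := (Finset.mem_filter.mp hb).2
      show (b : ℕ) ∈ Finset.range (k+1)
      exact Finset.mem_range.mpr (by omega)
    · intro a ha
      have := Finset.mem_range.mp ha
      show min a k = a
      omega
    · intro b hb
      have hbk : (b : ℕ) ≤ k := (Finset.mem_filter.mp hb).2
      exact Fin.ext (by show min (b : ℕ) k = (b : ℕ); omega)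
    · intro a ha
      have hak : a < k + 1 := Finset.mem_range.mp ha
      have han : a < n := by omega
      have hfin : ((⟨min a k, by omega⟩ : Fin n)) = ⟨a, han⟩ :=
        Fin.ext (by show min a k = a; omega)
      show (if h : a < n then u (d ⟨a, h⟩) else 0) = u (d ⟨min a k, by omega⟩)
      rw [dif_pos han, hfin]
  have hF : ∀ k : ℕ, k ≤ n → ∑ j ∈ Finset.range k, f j ≤ 0 := by
    intro k hk
    rcases Nat.eq_zero_or_pos k with rfl | hkpos
    · simp
    have hk1 : k - 1 < n := by omega
    have hkk : k - 1 + 1 = k := by omega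
    have h1 := hsumconv (fun i => α i * q i) (k-1) hk1
    have h2 := hsumconv (fun i => α i * v i) (k-1) hk1
    have hp := hprefix ⟨k-1, hk1⟩
    have : ∑ j ∈ Finset.range k, f j =
        (∑ j ∈ Finset.range (k-1+1), (if h : j < n then α (d ⟨j,h⟩) * q (d ⟨j,h⟩) else 0)) -
        (∑ j ∈ Finset.range (k-1+1), (if h : j < n then α (d ⟨j,h⟩) * v (d ⟨j,h⟩) else 0)) := by
      rw [hkk, ← Finset.sum_sub_distrib]
      refine Finset.sum_congr rfl fun j hj => ?_
      simp only [hf]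
      have hjn : j < n := by have := Finset.mem_range.mp hj; omega
      rw [dif_pos hjn, dif_pos hjn, dif_pos hjn]
      ring
    rw [this, h1, h2]
    linarith
  -- rewrite the goal sum
  have key : ∑ i, α i * w i * x i * (q i - v i) = ∑ j ∈ Finset.range n, g j • f j := by
    rw [← Equiv.sum_comp d (fun i => α i * w i * x i * (q i - v i)),
      ← Fin.sum_univ_eq_sum_range (fun j => g j • f j) n]
    refine Finset.sum_congr rfl fun j _ => ?_
    simp only [hg, hf, j.isLt, dif_pos, Fin.eta, smul_eq_mul]
    ring
  rw [key, Finset.sum_range_by_parts g f n]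
  have hterm1 : g (n-1) • ∑ j ∈ Finset.range n, f j ≤ 0 := by
    have := hF n le_rfl
    exact smul_nonpos_of_nonneg_of_nonpos (hg0 _) this
  have hterm2 : 0 ≤ ∑ i ∈ Finset.range (n-1), (g (i+1) - g i) • ∑ j ∈ Finset.range (i+1), f j := by
    refine Finset.sum_nonneg fun i hi => ?_
    have hin : i + 1 ≤ n := by have := Finset.mem_range.mp hi; omega
    have h1 : g (i+1) - g i ≤ 0 := by linarith [hgmono i (i+1) (by omega)]
    have h2 := hF (i+1) hin
    simpa [smul_eq_mul] using mul_nonneg_of_nonpos_of_nonpos h1 h2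
  linarith
end

section
/- Let q ∈ ℝⁿ with q ⪰ 0 and ε > 0 be such that q + ε·𝟙 ∈ C, where 𝟙 = (1, …, 1). Then for every x ∈ ℝⁿ with x ⪰ 0, ⟨x, q⟩ − max_{d ∈ D} ⟨x, p(d)⟩ ≤ −ε · Σ_{i=1}^{n} x_i. -/
open Finset Set

theorem stmt12 {n : ℕ} (hn : 1 ≤ n)
    (p : Equiv.Perm (Fin n) → Fin n → ℝ) (hp : ∀ d i, 0 ≤ p d i)
    (q : Fin n → ℝ) (hq : ∀ i, 0 ≤ q i) (ε : ℝ) (hε : 0 < ε)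
    (hC : (fun i => q i + ε) ∈ Cfull p) :
    ∀ x : Fin n → ℝ, (∀ i, 0 ≤ x i) →
      ip x q - sSup (Set.range fun d : Equiv.Perm (Fin n) => ip x (p d)) ≤
        -ε * ∑ i, x i := by
  intro x hx
  set M := sSup (Set.range fun d : Equiv.Perm (Fin n) => ip x (p d)) with hM
  obtain ⟨-, y, hy, hqy⟩ := hC
  have hlin : IsLinearMap ℝ (fun z : Fin n → ℝ => ip x z) := by
    constructor
    · intro u v; simp [ip, mul_add, Finset.sum_add_distrib]
    · intro c u; simp only [ip, Pi.smul_apply, smul_eq_mul, Finset.mul_sum]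
      exact Finset.sum_congr rfl fun i _ => by ring
  have hbdd : BddAbove (Set.range fun d : Equiv.Perm (Fin n) => ip x (p d)) :=
    (Set.finite_range _).bddAbove
  have hsub : Pfull p ⊆ {z | ip x z ≤ M} := by
    rintro _ ⟨d, rfl⟩
    exact le_csSup hbdd ⟨d, rfl⟩
  have hyM : ip x y ≤ M :=
    convexHull_min hsub (convex_halfSpace_le hlin M) hy
  have key : ip x (fun i => q i + ε) ≤ ip x y := by
    apply Finset.sum_le_sum
    intro i _
    exact mul_le_mul_of_nonneg_left (hqy i) (hx i)
  have expand : ip x (fun i => q i + ε) = ip x q + ε * ∑ i, x i := by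
    simp [ip, mul_add, Finset.sum_add_distrib, Finset.mul_sum, mul_comm]
  linarith
end

section
/- Suppose the system satisfies monotonicity in payoffs. Then for every β ∈ ℝⁿ with β ⪰ 0 and all subsets S′ ⊆ S ⊆ N, min_{d ∈ D(S)} ⟨β^S, p(d)^S⟩ ≤ min_{d ∈ D(S)} ⟨β^{S∖S′}, p(d)^{S∖S′}⟩ + min_{d ∈ D(S′)} ⟨β^{S′}, p(d)^{S′}⟩. -/
open Finset Set

section Aux

variable {n : ℕ}

lemma card_filter_lt_aux (c : ℕ) (hc : c ≤ n) :
    (Finset.univ.filter fun k : Fin n => (k : ℕ) < c).card = c := by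
  have hh : ∀ m ∈ Finset.range c, m < n := fun m hm =>
    lt_of_lt_of_le (Finset.mem_range.mp hm) hc
  have : (Finset.univ.filter fun k : Fin n => (k : ℕ) < c)
      = (Finset.range c).attachFin hh := by
    ext k; simp [Finset.mem_attachFin]
  rw [this, Finset.card_attachFin, Finset.card_range]

lemma exists_inDS (S : Finset (Fin n)) : ∃ d : Equiv.Perm (Fin n), inDS S d := by
  have hcn : S.card ≤ n := le_trans (Finset.card_le_univ S) (by simp)
  have hcompl : Sᶜ.card = n - S.card := by simp [Finset.card_compl]
  set f : Fin n → Fin n := fun k =>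
    if h : (k : ℕ) < S.card then S.orderEmbOfFin rfl ⟨(k : ℕ), h⟩
    else Sᶜ.orderEmbOfFin hcompl ⟨(k : ℕ) - S.card, by have := k.isLt; omega⟩
    with hfdef
  have hmemS : ∀ k : Fin n, (k : ℕ) < S.card → f k ∈ S := fun k h => by
    simp only [hfdef, dif_pos h]; exact Finset.orderEmbOfFin_mem ..
  have hmemC : ∀ k : Fin n, ¬ (k : ℕ) < S.card → f k ∉ S := fun k h => by
    simp only [hfdef, dif_neg h]
    exact Finset.mem_compl.mp (Finset.orderEmbOfFin_mem ..)
  have hinj : Function.Injective f := by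
    intro a b hab
    by_cases ha : (a : ℕ) < S.card <;> by_cases hb : (b : ℕ) < S.card
    · simp only [hfdef, dif_pos ha, dif_pos hb] at hab
      have := (S.orderEmbOfFin rfl).injective hab
      exact Fin.ext (by simpa using congrArg Fin.val this)
    · exact absurd (hab ▸ hmemS a ha) (hmemC b hb)
    · exact absurd (hab ▸ hmemC a ha) (not_not_intro (hmemS b hb))
    · simp only [hfdef, dif_neg ha, dif_neg hb] at hab
      have := (Sᶜ.orderEmbOfFin hcompl).injective hab
      have hv : (a : ℕ) - S.card = (b : ℕ) - S.card := by
        simpa using congrArg Fin.val this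
      exact Fin.ext (by omega)
  refine ⟨Equiv.ofBijective f (Finite.injective_iff_bijective.mp hinj), fun k => ?_⟩
  simp only [Equiv.ofBijective_apply]
  constructor
  · intro h; by_contra hk; exact hmemC k hk h
  · exact hmemS k

lemma key_perm (S' S : Finset (Fin n)) (hss : S' ⊆ S) (d₁ d₂ : Equiv.Perm (Fin n))
    (h₁ : inDS S d₁) (h₂ : inDS S' d₂) :
    ∃ d : Equiv.Perm (Fin n), inDS S d ∧
      (∀ i ∈ S \ S', higherSet d₁ i ⊆ higherSet d i) ∧
      (∀ i ∈ S', higherSet d₂ i ⊆ higherSet d i) := by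
  set m := S'.card with hm
  set c := S.card with hc
  have hmc : m ≤ c := Finset.card_le_card hss
  have hcn : c ≤ n := le_trans (Finset.card_le_univ S) (by simp)
  set T : Finset (Fin n) := S'.image d₁.symm with hTdef
  have hTmem : ∀ k : Fin n, k ∈ T ↔ d₁ k ∈ S' := by
    intro k
    simp only [hTdef, Finset.mem_image]
    constructor
    · rintro ⟨a, ha, rfl⟩; simpa using ha
    · intro h; exact ⟨d₁ k, h, Equiv.symm_apply_apply _ _⟩
  have hTsub : ∀ k ∈ T, (k : ℕ) < c := fun k hk => (h₁ k).mp (hss ((hTmem k).mp hk))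
  have hTcard : T.card = m := Finset.card_image_of_injective _ d₁.symm.injective
  set U : Finset (Fin n) := (Finset.univ.filter fun k : Fin n => (k : ℕ) < c) \ T
    with hUdef
  have hUmem : ∀ k : Fin n, k ∈ U ↔ ((k : ℕ) < c ∧ k ∉ T) := by
    intro k; simp [hUdef]
  have hUcard : U.card = c - m := by
    rw [hUdef, Finset.card_sdiff_of_subset (fun k hk => by simp [hTsub k hk]),
      card_filter_lt_aux c hcn, hTcard]
  obtain ⟨f, hfdef⟩ : ∃ f : Fin n → Fin n, ∀ k : Fin n, f k =
      if h : (k : ℕ) < m then d₁.symm (d₂ k)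
      else if h2 : (k : ℕ) < c then U.orderEmbOfFin hUcard ⟨(k : ℕ) - m, by omega⟩
      else k := ⟨_, fun k => rfl⟩
  have hfT : ∀ k : Fin n, (k : ℕ) < m → d₁ (f k) = d₂ k := fun k h => by
    rw [hfdef k, dif_pos h, Equiv.apply_symm_apply]
  have hfT' : ∀ k : Fin n, (k : ℕ) < m → f k ∈ T := fun k h => by
    rw [hTmem, hfT k h]; exact (h₂ k).mpr h
  have hfU : ∀ k : Fin n, ¬ (k : ℕ) < m → (k : ℕ) < c → f k ∈ U := fun k h h2 => by
    rw [hfdef k, dif_neg h, dif_pos h2]; exact Finset.orderEmbOfFin_mem ..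
  have hfmono : ∀ k₁ k₂ : Fin n, ¬ (k₁ : ℕ) < m → (k₁ : ℕ) < c →
      ¬ (k₂ : ℕ) < m → (k₂ : ℕ) < c → (k₁ : ℕ) ≤ (k₂ : ℕ) → f k₁ ≤ f k₂ := by
    intro k₁ k₂ h1 h1c h2 h2c hle
    rw [hfdef k₁, dif_neg h1, dif_pos h1c, hfdef k₂, dif_neg h2, dif_pos h2c]
    exact (U.orderEmbOfFin hUcard).monotone (Fin.mk_le_mk.mpr (by omega))
  have hfid : ∀ k : Fin n, ¬ (k : ℕ) < c → f k = k := fun k h => by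
    rw [hfdef k, dif_neg (show ¬ (k : ℕ) < m by omega), dif_neg h]
  have hzone : ∀ k : Fin n, (f k ∈ T ↔ (k : ℕ) < m) ∧ (((f k : ℕ) < c) ↔ (k : ℕ) < c) := by
    intro k
    by_cases h : (k : ℕ) < m
    · have h1 := hfT' k h
      exact ⟨⟨fun _ => h, fun _ => h1⟩,
        ⟨fun _ => by omega, fun _ => hTsub _ h1⟩⟩
    · by_cases h2 : (k : ℕ) < c
      · have hu := (hUmem _).mp (hfU k h h2)
        exact ⟨⟨fun ht => absurd ht hu.2, fun hk => absurd hk h⟩,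
          ⟨fun _ => h2, fun _ => hu.1⟩⟩
      · rw [hfid k h2]
        refine ⟨⟨fun ht => absurd (hTsub _ ht) h2, fun hk => absurd hk h⟩, Iff.rfl⟩
  have hinj : Function.Injective f := by
    intro a b hab
    have zT : ((a : ℕ) < m) ↔ ((b : ℕ) < m) := by
      rw [← (hzone a).1, ← (hzone b).1, hab]
    have zc : ((a : ℕ) < c) ↔ ((b : ℕ) < c) := by
      rw [← (hzone a).2, ← (hzone b).2, hab]
    by_cases ha : (a : ℕ) < m
    · have hb := zT.mp ha
      rw [hfdef a, hfdef b, dif_pos ha, dif_pos hb] at hab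
      exact d₂.injective (d₁.symm.injective hab)
    · have hb := fun h => ha (zT.mpr h)
      by_cases ha2 : (a : ℕ) < c
      · have hb2 := zc.mp ha2
        rw [hfdef a, hfdef b, dif_neg ha, dif_pos ha2, dif_neg hb, dif_pos hb2] at hab
        have := (U.orderEmbOfFin hUcard).injective hab
        have hv : (a : ℕ) - m = (b : ℕ) - m := by simpa using congrArg Fin.val this
        exact Fin.ext (by omega)
      · have hb2 := fun h => ha2 (zc.mpr h)
        rw [hfid a ha2, hfid b hb2] at hab; exact hab
  obtain ⟨d, hd⟩ : ∃ d : Equiv.Perm (Fin n), ∀ k, d k = d₁ (f k) :=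
    ⟨(Equiv.ofBijective f (Finite.injective_iff_bijective.mp hinj)).trans d₁,
      fun k => rfl⟩
  have hfsymm : ∀ i : Fin n, f (d.symm i) = d₁.symm i := by
    intro i
    have h0 : d (d.symm i) = i := d.apply_symm_apply i
    rw [hd (d.symm i)] at h0
    exact d₁.injective (by rw [h0, Equiv.apply_symm_apply])
  refine ⟨d, ?_, ?_, ?_⟩
  · intro k
    rw [hd k, h₁ (f k), (hzone k).2]
  · -- i ∈ S \ S'
    intro i hi j hj
    rw [Finset.mem_sdiff] at hi
    simp only [higherSet, Set.mem_setOf_eq] at hj ⊢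
    set a := d₁.symm i with ha
    set b := d₁.symm j with hb
    set a' := d.symm i with ha'
    set b' := d.symm j with hb'
    have hfa : f a' = a := hfsymm i
    have hfb : f b' = b := hfsymm j
    have hac : (a : ℕ) < c := (h₁ a).mp (by rw [Equiv.apply_symm_apply]; exact hi.1)
    have haT : a ∉ T := fun h => hi.2 (by
      have := (hTmem a).mp h; rwa [Equiv.apply_symm_apply] at this)
    have ha'm : ¬ (a' : ℕ) < m := fun h => haT (hfa ▸ hfT' a' h)
    have ha'c : (a' : ℕ) < c := (hzone a').2.mp (by rw [hfa]; exact hac)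
    have hbc : (b : ℕ) < c := lt_trans hj hac
    by_cases hbT : b ∈ T
    · have hb'm : (b' : ℕ) < m := (hzone b').1.mp (hfb ▸ hbT)
      omega
    · have hbU : b ∈ U := (hUmem b).mpr ⟨hbc, hbT⟩
      have hb'm : ¬ (b' : ℕ) < m := fun h => hbT (hfb ▸ hfT' b' h)
      have hb'c : (b' : ℕ) < c := (hzone b').2.mp (by rw [hfb]; exact hbc)
      by_contra hcon
      have hle := hfmono a' b' ha'm ha'c hb'm hb'c (by omega)
      rw [hfa, hfb] at hle
      have := Fin.le_def.mp hle
      omega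
  · -- i ∈ S'
    intro i hi j hj
    simp only [higherSet, Set.mem_setOf_eq] at hj ⊢
    set a := d₂.symm i with ha
    set b := d₂.symm j with hb
    have ham : (a : ℕ) < m := (h₂ a).mp (by rw [Equiv.apply_symm_apply]; exact hi)
    have hbm : (b : ℕ) < m := lt_trans hj ham
    have hda : d a = i := by
      rw [hd a, hfdef a, dif_pos ham, Equiv.apply_symm_apply, Equiv.apply_symm_apply]
    have hdb : d b = j := by
      rw [hd b, hfdef b, dif_pos hbm, Equiv.apply_symm_apply, Equiv.apply_symm_apply]
    rw [← hda, ← hdb, Equiv.symm_apply_apply, Equiv.symm_apply_apply]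
    exact hj

lemma ip_projS (A : Finset (Fin n)) (β x : Fin n → ℝ) :
    ip (projS A β) (projS A x) = ∑ i ∈ A, β i * x i := by
  unfold ip projS
  rw [show (∑ i, (if i ∈ A then β i else 0) * (if i ∈ A then x i else 0))
      = ∑ i : Fin n, (if i ∈ A then β i * x i else 0) from
    Finset.sum_congr rfl fun i _ => by by_cases h : i ∈ A <;> simp [h]]
  rw [Finset.sum_ite_mem, Finset.univ_inter]

end Aux

theorem stmt13 {n : ℕ} (hn : 1 ≤ n)
    (p : Equiv.Perm (Fin n) → Fin n → ℝ) (hp : ∀ d i, 0 ≤ p d i)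
    (hmono : Mono p) :
    ∀ β : Fin n → ℝ, (∀ i, 0 ≤ β i) → ∀ S' S : Finset (Fin n), S' ⊆ S →
      sInf ((fun d => ip (projS S β) (projS S (p d))) '' {d | inDS S d}) ≤
        sInf ((fun d => ip (projS (S \ S') β) (projS (S \ S') (p d))) ''
            {d | inDS S d}) +
        sInf ((fun d => ip (projS S' β) (projS S' (p d))) '' {d | inDS S' d}) := by
  intro β hβ S' S hss
  obtain ⟨e, he⟩ := exists_inDS (n := n) S
  obtain ⟨e', he'⟩ := exists_inDS (n := n) S'
  have hDm : {d : Equiv.Perm (Fin n) | inDS S d}.Nonempty := ⟨e, he⟩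
  have hD' : {d : Equiv.Perm (Fin n) | inDS S' d}.Nonempty := ⟨e', he'⟩
  set Fm : Equiv.Perm (Fin n) → ℝ :=
    fun d => ip (projS (S \ S') β) (projS (S \ S') (p d)) with hFm
  set Fs : Equiv.Perm (Fin n) → ℝ :=
    fun d => ip (projS S' β) (projS S' (p d)) with hFs
  set FS : Equiv.Perm (Fin n) → ℝ :=
    fun d => ip (projS S β) (projS S (p d)) with hFS
  have hfin1 : (Fm '' {d : Equiv.Perm (Fin n) | inDS S d}).Finite :=
    (Set.toFinite _).image _
  have hfin2 : (Fs '' {d : Equiv.Perm (Fin n) | inDS S' d}).Finite :=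
    (Set.toFinite _).image _
  have hfin0 : (FS '' {d : Equiv.Perm (Fin n) | inDS S d}).Finite :=
    (Set.toFinite _).image _
  obtain ⟨d₁, hd₁D, hd₁⟩ := (hDm.image Fm).csInf_mem hfin1
  obtain ⟨d₂, hd₂D, hd₂⟩ := (hD'.image Fs).csInf_mem hfin2
  obtain ⟨d, hdS, hmon1, hmon2⟩ := key_perm S' S hss d₁ d₂ hd₁D hd₂D
  have step0 : sInf (FS '' {d : Equiv.Perm (Fin n) | inDS S d}) ≤ FS d :=
    csInf_le hfin0.bddBelow ⟨d, hdS, rfl⟩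
  have hsplit : FS d = (∑ i ∈ S \ S', β i * p d i) + ∑ i ∈ S', β i * p d i := by
    simp only [hFS]; rw [ip_projS, Finset.sum_sdiff hss]
  have hmid : (∑ i ∈ S \ S', β i * p d i) ≤ Fm d₁ := by
    simp only [hFm]; rw [ip_projS]
    refine Finset.sum_le_sum fun i hi => ?_
    exact mul_le_mul_of_nonneg_left (hmono d₁ d i (hmon1 i hi)) (hβ i)
  have hlast : (∑ i ∈ S', β i * p d i) ≤ Fs d₂ := by
    simp only [hFs]; rw [ip_projS]
    refine Finset.sum_le_sum fun i hi => ?_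
    exact mul_le_mul_of_nonneg_left (hmono d₂ d i (hmon2 i hi)) (hβ i)
  calc sInf (FS '' {d : Equiv.Perm (Fin n) | inDS S d}) ≤ FS d := step0
    _ = (∑ i ∈ S \ S', β i * p d i) + ∑ i ∈ S', β i * p d i := hsplit
    _ ≤ Fm d₁ + Fs d₂ := add_le_add hmid hlast
    _ = sInf (Fm '' {d : Equiv.Perm (Fin n) | inDS S d}) +
        sInf (Fs '' {d : Equiv.Perm (Fin n) | inDS S' d}) := by rw [hd₁, hd₂]
end

section
/- Let S ⊆ N be a nonempty subset, λ ≥ 0, and v ∈ ℝⁿ with v ⪰ 0. Suppose there exist x, y ∈ convexHull(P^S) with x ⪯ λ·v^S and v^S ⪯ y (componentwise). Then for every nonzero α ∈ ℝⁿ with α ⪰ 0 and α_i = 0 for i ∉ S, min_{d ∈ D(S)} ⟨α, p(d)^S⟩ ≤ λ · max_{d ∈ D(S)} ⟨α, p(d)^S⟩. -/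
open Finset Set

/-- The inner product with a fixed vector as a linear map. -/
def ipL {n : ℕ} (α : Fin n → ℝ) : (Fin n → ℝ) →ₗ[ℝ] ℝ where
  toFun x := ∑ i, α i * x i
  map_add' x y := by simp [mul_add, Finset.sum_add_distrib]
  map_smul' c x := by
    simp [Finset.mul_sum, smul_eq_mul, mul_left_comm]

theorem stmt15 {n : ℕ} (hn : 1 ≤ n)
    (p : Equiv.Perm (Fin n) → Fin n → ℝ) (hp : ∀ d i, 0 ≤ p d i)
    (S : Finset (Fin n)) (hS : S.Nonempty) (lam : ℝ) (hlam : 0 ≤ lam)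
    (v : Fin n → ℝ) (hv : ∀ i, 0 ≤ v i)
    (hx : ∃ x ∈ convexHull ℝ (PS p S), ∀ i, x i ≤ lam * projS S v i)
    (hy : ∃ y ∈ convexHull ℝ (PS p S), ∀ i, projS S v i ≤ y i) :
    ∀ α : Fin n → ℝ, α ≠ 0 → (∀ i, 0 ≤ α i) → (∀ i, i ∉ S → α i = 0) →
      sInf ((fun d => ip α (projS S (p d))) '' {d | inDS S d}) ≤
        lam * sSup ((fun d => ip α (projS S (p d))) '' {d | inDS S d}) := by
  intro α hα0 hαnn hαS
  obtain ⟨x, hxc, hxle⟩ := hx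
  obtain ⟨y, hyc, hyle⟩ := hy
  set T := ((fun d => ip α (projS S (p d))) '' {d | inDS S d}) with hT
  have hTfin : T.Finite := (Set.toFinite _).image _
  have hPSne : (PS p S).Nonempty := by
    by_contra h
    rw [Set.not_nonempty_iff_eq_empty] at h
    rw [h, convexHull_empty] at hxc
    exact hxc
  have hTne : T.Nonempty := by
    obtain ⟨z, d, hd, rfl⟩ := hPSne
    exact ⟨ip α (projS S (p d)), ⟨d, hd, rfl⟩⟩
  have hbdd : BddBelow T := hTfin.bddBelow
  have hbdd' : BddAbove T := hTfin.bddAbove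
  -- image of PS under ipL is T
  have himg : ipL α '' (PS p S) = T := by
    ext t
    constructor
    · rintro ⟨z, ⟨d, hd, rfl⟩, rfl⟩
      exact ⟨d, hd, rfl⟩
    · rintro ⟨d, hd, rfl⟩
      exact ⟨projS S (p d), ⟨d, hd, rfl⟩, rfl⟩
  have hIcc : ∀ z ∈ convexHull ℝ (PS p S), ipL α z ∈ Set.Icc (sInf T) (sSup T) := by
    intro z hz
    have h1 : ipL α z ∈ convexHull ℝ (ipL α '' (PS p S)) := by
      rw [← (ipL α).image_convexHull]
      exact ⟨z, hz, rfl⟩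
    rw [himg] at h1
    have h2 : convexHull ℝ T ⊆ Set.Icc (sInf T) (sSup T) := by
      apply convexHull_min _ (convex_Icc _ _)
      intro t ht
      exact ⟨csInf_le hbdd ht, le_csSup hbdd' ht⟩
    exact h2 h1
  have hx1 : sInf T ≤ ipL α x := (hIcc x hxc).1
  have hy1 : ipL α y ≤ sSup T := (hIcc y hyc).2
  have hx2 : ipL α x ≤ lam * (ipL α (projS S v)) := by
    show (∑ i, α i * x i) ≤ lam * ∑ i, α i * projS S v i
    rw [Finset.mul_sum]
    apply Finset.sum_le_sum
    intro i _
    calc α i * x i ≤ α i * (lam * projS S v i) :=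
          mul_le_mul_of_nonneg_left (hxle i) (hαnn i)
      _ = lam * (α i * projS S v i) := by ring
  have hy2 : ipL α (projS S v) ≤ ipL α y := by
    show (∑ i, α i * projS S v i) ≤ ∑ i, α i * y i
    apply Finset.sum_le_sum
    intro i _
    exact mul_le_mul_of_nonneg_left (hyle i) (hαnn i)
  calc sInf T ≤ ipL α x := hx1
    _ ≤ lam * ipL α (projS S v) := hx2
    _ ≤ lam * ipL α y := mul_le_mul_of_nonneg_left hy2 hlam
    _ ≤ lam * sSup T := mul_le_mul_of_nonneg_left hy1 hlam
end

section
/- Suppose the system satisfies monotonicity in payoffs. Then for every priority decision d ∈ D and every subset S ⊆ N, there exists a priority decision d′ ∈ D(S) (namely, the decision obtained by moving the users of S to the top while preserving the relative priority orders within S and within its complement) such that p_i(d′) ≥ p_i(d) for every i ∈ S. -/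
open Finset

lemma countLt_strictMonoOn {n : ℕ} (A : Finset (Fin n)) :
    StrictMonoOn (fun k => (A.filter (· < k)).card) (A : Set (Fin n)) := by
  intro k1 h1 k2 h2 h
  apply Finset.card_lt_card
  constructor
  · intro x hx
    simp only [mem_filter] at hx ⊢
    exact ⟨hx.1, hx.2.trans h⟩
  · intro hsub
    have hk1 : k1 ∈ A := h1
    have : k1 ∈ A.filter (· < k2) := by simp [hk1, h]
    have := hsub this
    simp at this

lemma exists_topPerm {n : ℕ} (A : Finset (Fin n)) :
    ∃ ρ : Equiv.Perm (Fin n),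
      (∀ k, (ρ k : ℕ) < A.card ↔ k ∈ A) ∧
      (∀ k1 ∈ A, ∀ k2 ∈ A, (k1 < k2 ↔ ρ k1 < ρ k2)) ∧
      (∀ k1 ∉ A, ∀ k2 ∉ A, (k1 < k2 ↔ ρ k1 < ρ k2)) := by
  have hlt1 : ∀ k ∈ A, (A.filter (· < k)).card < n := by
    intro k hk
    have h1 : A.filter (· < k) ⊂ A := by
      constructor
      · exact filter_subset _ _
      · intro hsub
        have := hsub hk
        simp at this
    exact lt_of_lt_of_le (card_lt_card h1) (le_trans (card_le_univ A) (by simp))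
  have hlt2 : ∀ k ∉ A, A.card + ((Aᶜ).filter (· < k)).card < n := by
    intro k hk
    have hk' : k ∈ Aᶜ := by simpa using hk
    have h1 : (Aᶜ).filter (· < k) ⊂ Aᶜ := by
      constructor
      · exact filter_subset _ _
      · intro hsub
        have := hsub hk'
        simp at this
    have := card_lt_card h1
    have hmain : A.card + Aᶜ.card = n := by
      rw [Finset.card_add_card_compl]; simp
    omega
  classical
  set f : Fin n → Fin n := fun k =>
    if h : k ∈ A then ⟨(A.filter (· < k)).card, hlt1 k h⟩
    else ⟨A.card + ((Aᶜ).filter (· < k)).card, hlt2 k h⟩ with hf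
  have hmem : ∀ k, (f k : ℕ) < A.card ↔ k ∈ A := by
    intro k
    by_cases h : k ∈ A
    · simp only [hf, dif_pos h, h, iff_true]
      have : A.filter (· < k) ⊂ A := by
        constructor
        · exact filter_subset _ _
        · intro hsub; have := hsub h; simp at this
      exact card_lt_card this
    · simp only [hf, dif_neg h, h, iff_false, not_lt]
      exact Nat.le_add_right _ _
  have hS : ∀ k1 ∈ A, ∀ k2 ∈ A, (k1 < k2 ↔ f k1 < f k2) := by
    intro k1 h1 k2 h2
    simp only [hf, dif_pos h1, dif_pos h2, Fin.lt_def]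
    exact ((countLt_strictMonoOn A).lt_iff_lt h1 h2).symm
  have hSc : ∀ k1 ∉ A, ∀ k2 ∉ A, (k1 < k2 ↔ f k1 < f k2) := by
    intro k1 h1 k2 h2
    have h1' : k1 ∈ Aᶜ := by simpa using h1
    have h2' : k2 ∈ Aᶜ := by simpa using h2
    simp only [hf, dif_neg h1, dif_neg h2, Fin.lt_def]
    have := ((countLt_strictMonoOn (Aᶜ)).lt_iff_lt h1' h2').symm
    simp only [Fin.lt_def] at this ⊢
    omega
  have hinj : Function.Injective f := by
    intro k1 k2 h
    by_cases h1 : k1 ∈ A <;> by_cases h2 : k2 ∈ A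
    · rcases lt_trichotomy k1 k2 with hc | hc | hc
      · exact absurd ((hS k1 h1 k2 h2).mp hc) (by rw [h]; exact lt_irrefl _)
      · exact hc
      · exact absurd ((hS k2 h2 k1 h1).mp hc) (by rw [h]; exact lt_irrefl _)
    · exfalso
      have a1 := (hmem k1).mpr h1
      have a2 := (hmem k2)
      rw [h] at a1
      exact h2 (a2.mp a1)
    · exfalso
      have a1 := (hmem k2).mpr h2
      rw [← h] at a1
      exact h1 ((hmem k1).mp a1)
    · rcases lt_trichotomy k1 k2 with hc | hc | hc
      · exact absurd ((hSc k1 h1 k2 h2).mp hc) (by rw [h]; exact lt_irrefl _)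
      · exact hc
      · exact absurd ((hSc k2 h2 k1 h1).mp hc) (by rw [h]; exact lt_irrefl _)
  exact ⟨Equiv.ofBijective f (Finite.injective_iff_bijective.mp hinj),
    hmem, hS, hSc⟩

open Finset Set

theorem stmt16 {n : ℕ} (hn : 1 ≤ n)
    (p : Equiv.Perm (Fin n) → Fin n → ℝ) (hp : ∀ d i, 0 ≤ p d i)
    (hmono : Mono p) :
    ∀ (d : Equiv.Perm (Fin n)) (S : Finset (Fin n)),
      ∃ d' : Equiv.Perm (Fin n), inDS S d' ∧
        (∀ i ∈ S, ∀ j ∈ S,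
          ((d.symm i : ℕ) < (d.symm j : ℕ) ↔ (d'.symm i : ℕ) < (d'.symm j : ℕ))) ∧
        (∀ i ∉ S, ∀ j ∉ S,
          ((d.symm i : ℕ) < (d.symm j : ℕ) ↔ (d'.symm i : ℕ) < (d'.symm j : ℕ))) ∧
        ∀ i ∈ S, p d i ≤ p d' i := by
  intro d S
  classical
  set A : Finset (Fin n) := S.image d.symm with hA
  have hcard : A.card = S.card := Finset.card_image_of_injective _ d.symm.injective
  have hmemA : ∀ i, i ∈ S ↔ d.symm i ∈ A := by
    intro i
    constructor
    · intro h; exact Finset.mem_image_of_mem _ h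
    · intro h
      rcases Finset.mem_image.mp h with ⟨j, hj, hji⟩
      rwa [← d.symm.injective hji]
  obtain ⟨ρ, hmem, hS, hSc⟩ := exists_topPerm A
  refine ⟨ρ.symm.trans d, ?_, ?_, ?_, ?_⟩
  · intro k
    have : (ρ.symm.trans d) k = d (ρ.symm k) := rfl
    rw [this, ← hcard]
    rw [show d (ρ.symm k) ∈ S ↔ ρ.symm k ∈ A by
      rw [hmemA (d (ρ.symm k))]; simp]
    rw [← hmem (ρ.symm k)]
    simp
  · intro i hi j hj
    have h1 : d.symm i ∈ A := (hmemA i).mp hi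
    have h2 : d.symm j ∈ A := (hmemA j).mp hj
    have := hS _ h1 _ h2
    simp only [Fin.lt_def] at this
    simpa using this
  · intro i hi j hj
    have h1 : d.symm i ∉ A := fun h => hi ((hmemA i).mpr h)
    have h2 : d.symm j ∉ A := fun h => hj ((hmemA j).mpr h)
    have := hSc _ h1 _ h2
    simp only [Fin.lt_def] at this
    simpa using this
  · intro i hi
    apply hmono
    intro j hj
    simp only [higherSet, Set.mem_setOf_eq, Equiv.symm_trans_apply,
      Equiv.symm_symm] at hj ⊢
    have hiA : d.symm i ∈ A := (hmemA i).mp hi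
    have hρi : (ρ (d.symm i) : ℕ) < A.card := (hmem _).mpr hiA
    have hjA : d.symm j ∈ A := (hmem _).mp (lt_trans hj hρi)
    exact (hS _ hjA _ hiA).mpr hj
end
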